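/- arXiv:1604.01234 — 3 statements merged into one kernel-verified Lean document; each statement's English description precedes it below -/
import Mathlib

section
/- Let a = {a_j} be a positive, decreasing, summable sequence and let D_a ∈ 𝒞_a be the decreasing complementary set. Then dim_A D_a is either 0 or 1. Moreover, dim_A D_a = 0 if and only if there is some ε > 0 such that a_j ≥ ε Σ_{i=j+1}^∞ a_i for all j. -/
open scoped BigOperators
open Set

/-- `coverNum r F` is the minimal number of closed balls of radius `r`
needed to cover `F`. -/
noncomputable def coverNum (r : ℝ) (F : Set ℝ) : ℕ :=
  sInf {n : ℕ | ∃ S : Finset ℝ, S.card = n ∧ F ⊆ ⋃ x ∈ S, Metric.closedBall x r}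

/-- The Assouad dimension of a set `F ⊆ ℝ`. -/
noncomputable def dimA (F : Set ℝ) : ℝ :=
  sInf {α : ℝ | ∃ c > (0 : ℝ), ∃ ρ > (0 : ℝ), ∀ x ∈ F, ∀ r R : ℝ,
    0 < r → r < R → R < ρ →
    (coverNum r (Metric.closedBall x R ∩ F) : ℝ) ≤ c * (R / r) ^ α}

/-- The Lower Assouad dimension of a set `F ⊆ ℝ`. -/
noncomputable def dimL (F : Set ℝ) : ℝ :=
  sSup {α : ℝ | ∃ c > (0 : ℝ), ∃ ρ > (0 : ℝ), ∀ x ∈ F, ∀ r R : ℝ,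
    0 < r → r < R → R < ρ →
    c * (R / r) ^ α ≤ (coverNum r (Metric.closedBall x R ∩ F) : ℝ)}

/-- `E` is a complementary set of the (positive, summable) sequence `a`,
i.e. `E ∈ 𝒞_a`:  `E = [0, L] \ ⋃ U n` where the `U n` are disjoint open
intervals in `[0, L]` with `U n` of length `a n`, and `L = ∑ a`. -/
def IsComplementarySet (a : ℕ → ℝ) (E : Set ℝ) : Prop :=
  ∃ U : ℕ → Set ℝ,
    (∀ n, ∃ p q : ℝ, p < q ∧ q - p = a n ∧ U n = Set.Ioo p q) ∧
    (∀ n, U n ⊆ Set.Icc 0 (∑' i, a i)) ∧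
    Pairwise (Function.onFun Disjoint U) ∧
    E = Set.Icc 0 (∑' i, a i) \ ⋃ n, U n

/-- The decreasing complementary set `D_a = {∑_{i ≥ k} a i : k} ∪ {0}`,
obtained by placing the gaps in order from right to left starting at `L`. -/
noncomputable def decSet (a : ℕ → ℝ) : Set ℝ :=
  {0} ∪ {x : ℝ | ∃ k : ℕ, x = ∑' i : ℕ, a (k + i)}

/-- Length of the `j`-th closed interval (0-indexed, `j < 2 ^ k`) at step `k`
of the construction of the Cantor set associated to the gap sequence `a`:
it is the total length of all the gaps to be removed from that interval. -/
noncomputable def cantorLen (a : ℕ → ℝ) (k j : ℕ) : ℝ :=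
  ∑' m : ℕ, ∑ i ∈ Finset.range (2 ^ m), a (2 ^ (k + m) - 1 + 2 ^ m * j + i)

/-- Left endpoint of the `j`-th closed interval (0-indexed, `j < 2 ^ k`) at
step `k` of the construction of the Cantor set associated to `a`:  removing
from each step-`k` interval `I_j^k` the open gap of length `a (2 ^ k - 1 + j)`
produces the two step-`(k+1)` intervals `I_{2j}^{k+1}` and `I_{2j+1}^{k+1}`. -/
noncomputable def cantorLeft (a : ℕ → ℝ) : ℕ → ℕ → ℝ
  | 0, _ => 0
  | k + 1, j =>
    if j % 2 = 0 then cantorLeft a k (j / 2)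
    else cantorLeft a k (j / 2) + cantorLen a (k + 1) (j - 1) + a (2 ^ k - 1 + j / 2)

/-- The Cantor set `C_a` associated to the gap sequence `a`. -/
noncomputable def assocCantor (a : ℕ → ℝ) : Set ℝ :=
  ⋂ k : ℕ, ⋃ j ∈ Finset.range (2 ^ k),
    Set.Icc (cantorLeft a k j) (cantorLeft a k j + cantorLen a k j)

/-- `avgLen a n = s_n^{(a)} = 2 ^ (-n) ∑_{j ≥ 2 ^ n - 1} a j`, the average length of
the step-`n` intervals of `C_a` (with `a` 0-indexed, so this matches
`2^{-n} Σ_{j=2^n}^∞ a_j` for the 1-indexed sequence of the paper). -/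
noncomputable def avgLen (a : ℕ → ℝ) (n : ℕ) : ℝ :=
  (∑' j : ℕ, a (2 ^ n - 1 + j)) / 2 ^ n

/-- The gap sequence of the central Cantor set with ratio sequence `r`
(0-indexed): the gap `a i` has length `r 0 ⋯ r (n-1) * (1 - 2 * r n)` where
`2 ^ n - 1 ≤ i ≤ 2 ^ (n+1) - 2`, i.e. `n = log₂ (i + 1)`.  The central Cantor
set `C{r_j}` itself is `assocCantor (centralGaps r)`. -/
noncomputable def centralGaps (r : ℕ → ℝ) (i : ℕ) : ℝ :=
  (∏ j ∈ Finset.range (Nat.log 2 (i + 1)), r j) * (1 - 2 * r (Nat.log 2 (i + 1)))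

/-- A decreasing sequence `a` is doubling if `a n ≤ τ * a (2 * n)` (1-indexed)
for some constant `τ`; with 0-indexing this reads `a n ≤ τ * a (2 * n + 1)`. -/
def IsDoubling (a : ℕ → ℝ) : Prop :=
  ∃ τ : ℝ, ∀ n : ℕ, a n ≤ τ * a (2 * n + 1)

/-- A general sequence is doubling if its decreasing rearrangement is. -/
def IsDoublingGen (a : ℕ → ℝ) : Prop :=
  ∃ σ : Equiv.Perm ℕ, Antitone (a ∘ σ) ∧ IsDoubling (a ∘ σ)

section AuxDimA
open Set Filter MeasureTheory
open scoped ENNReal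

lemma cover_Icc (r B u : ℝ) (hr : 0 < r) (hB : 0 ≤ B) :
    ∃ S : Finset ℝ, (S.card : ℝ) ≤ B / (2*r) + 1 ∧
      Set.Icc u (u + B) ⊆ ⋃ y ∈ S, Metric.closedBall y r := by
  set N : ℕ := ⌊B / (2*r)⌋₊ + 1 with hN
  refine ⟨(Finset.range N).image (fun i : ℕ => u + (2*(i:ℝ)+1)*r), ?_, ?_⟩
  · calc ((Finset.image (fun i : ℕ => u + (2*(i:ℝ)+1)*r) (Finset.range N)).card : ℝ)
        ≤ ((Finset.range N).card : ℝ) := by exact_mod_cast Finset.card_image_le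
    _ = (⌊B / (2*r)⌋₊ : ℝ) + 1 := by simp [hN]
    _ ≤ B / (2*r) + 1 := by
        have := Nat.floor_le (a := B / (2*r)) (by positivity)
        linarith
  · intro z hz
    obtain ⟨hz1, hz2⟩ := hz
    set i : ℕ := ⌊(z - u) / (2*r)⌋₊ with hi
    have h2r : (0:ℝ) < 2*r := by linarith
    have hnn : 0 ≤ (z - u) / (2*r) := by
      apply div_nonneg <;> linarith
    have hfl : (i:ℝ) * (2*r) ≤ z - u := (le_div_iff₀ h2r).mp (Nat.floor_le hnn)
    have hfl2 : z - u < ((i:ℝ) + 1) * (2*r) := (div_lt_iff₀ h2r).mp (Nat.lt_floor_add_one _)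
    have hiN : i < N := by
      have : i ≤ ⌊B / (2*r)⌋₊ := Nat.floor_le_floor (by gcongr; linarith)
      omega
    refine Set.mem_iUnion₂.mpr ⟨u + (2*(i:ℝ)+1)*r, ?_, ?_⟩
    · exact Finset.mem_image.mpr ⟨i, Finset.mem_range.mpr hiN, rfl⟩
    · rw [Metric.mem_closedBall, Real.dist_eq, abs_le]
      constructor <;> nlinarith

lemma card_ge_of_cover (S : Finset ℝ) (s B : ℝ) (hs : 0 ≤ s)
    (h : Set.Icc (0:ℝ) B ⊆ ⋃ y ∈ S, Metric.closedBall y s) :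
    B ≤ (S.card : ℝ) * (2*s) := by
  rcases le_or_gt B 0 with hB | hB
  · nlinarith [S.card.cast_nonneg (α := ℝ)]
  have h1 : volume (Set.Icc (0:ℝ) B) ≤ ∑ y ∈ S, volume (Metric.closedBall y s) :=
    le_trans (measure_mono h) (measure_biUnion_finset_le S _)
  rw [Real.volume_Icc] at h1
  have h2 : ∑ y ∈ S, volume (Metric.closedBall y s) = (S.card : ℕ) • ENNReal.ofReal (2*s) := by
    rw [Finset.sum_congr rfl (fun y _ => Real.volume_closedBall y s), Finset.sum_const]
  rw [h2, nsmul_eq_mul] at h1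
  have h3 : (S.card : ℝ≥0∞) * ENNReal.ofReal (2*s) = ENNReal.ofReal ((S.card : ℝ) * (2*s)) := by
    rw [ENNReal.ofReal_mul (by positivity), ENNReal.ofReal_mul (by norm_num), ← ENNReal.ofReal_natCast S.card, ENNReal.ofReal_mul (by norm_num : (0:ℝ) ≤ 2)]
  rw [h3] at h1
  have := (ENNReal.ofReal_le_ofReal_iff (by positivity)).mp h1
  linarith

lemma tailT_summable (a : ℕ → ℝ) (hsum : Summable a) (k : ℕ) : Summable (fun i => a (k + i)) := by
  simpa [add_comm] using (summable_nat_add_iff k).mpr hsum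

lemma tailT_succ (a : ℕ → ℝ) (hsum : Summable a) (k : ℕ) :
    (∑' i, a (k + i)) = a k + ∑' i, a (k + 1 + i) := by
  rw [Summable.tsum_eq_zero_add (tailT_summable a hsum k)]
  simp only [add_zero]
  congr 1
  apply tsum_congr
  intro i
  congr 1
  omega

lemma tailT_nonneg (a : ℕ → ℝ) (hpos : ∀ n, 0 < a n) (k : ℕ) : 0 ≤ ∑' i, a (k + i) :=
  tsum_nonneg (fun i => (hpos _).le)

lemma tailT_pos (a : ℕ → ℝ) (hpos : ∀ n, 0 < a n) (hsum : Summable a) (k : ℕ) :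
    0 < ∑' i, a (k + i) := by
  rw [tailT_succ a hsum k]
  have := tailT_nonneg a hpos (k+1)
  linarith [hpos k]

lemma tailT_anti (a : ℕ → ℝ) (hpos : ∀ n, 0 < a n) (hsum : Summable a) :
    StrictAnti (fun k => ∑' i, a (k + i)) := by
  apply strictAnti_nat_of_succ_lt
  intro k
  have := tailT_succ a hsum k
  show (∑' i, a (k + 1 + i)) < ∑' i, a (k + i)
  linarith [hpos k]

lemma tailT_tendsto (a : ℕ → ℝ) (hsum : Summable a) :
    Tendsto (fun k => ∑' i, a (k + i)) atTop (nhds 0) := by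
  have := tendsto_sum_nat_add a
  apply this.congr
  intro k
  apply tsum_congr
  intro i
  congr 1
  omega

set_option maxHeartbeats 1000000 in
lemma lac_mem (a : ℕ → ℝ) (hpos : ∀ n, 0 < a n) (hdec : Antitone a) (hsum : Summable a)
    (ε : ℝ) (hε : 0 < ε) (hεa : ∀ j, ε * (∑' i, a (j + 1 + i)) ≤ a j)
    (α : ℝ) (hα : 0 < α) :
    ∃ c > (0:ℝ), ∃ ρ > (0:ℝ), ∀ x ∈ decSet a, ∀ r R : ℝ, 0 < r → r < R → R < ρ →
      (coverNum r (Metric.closedBall x R ∩ decSet a) : ℝ) ≤ c * (R / r) ^ α := by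
  classical
  set T : ℕ → ℝ := fun k => ∑' i, a (k + i) with hTdef
  have hlog : 0 < Real.log (1+ε) := Real.log_pos (by linarith)
  have hgeo : ∀ k m, (1+ε)^m * T (k+m) ≤ T k := by
    intro k m
    induction m with
    | zero => simp
    | succ m ih =>
      have h1 := hεa (k+m)
      have h2 := tailT_succ a hsum (k+m)
      have hstep : (1+ε) * T (k+m+1) ≤ T (k+m) := by
        have : T (k+m+1) = ∑' i, a (k+m+1+i) := rfl
        have : T (k+m) = ∑' i, a (k+m+i) := rfl
        simp only [hTdef]
        have e1 : (∑' i, a (k+m+1+i)) = ∑' i, a ((k+m)+1+i) := by norm_num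
        nlinarith [tailT_nonneg a hpos (k+m+1), h1, h2]
      calc (1+ε)^(m+1) * T (k+(m+1)) = (1+ε)^m * ((1+ε) * T (k+m+1)) := by
            rw [pow_succ]; ring_nf
      _ ≤ (1+ε)^m * T (k+m) := by
            exact mul_le_mul_of_nonneg_left hstep (pow_nonneg (by linarith) m)
      _ ≤ T k := ih
  refine ⟨1/ε + 3 + (2 + 1/α) / Real.log (1+ε), ?_, 1, one_pos, ?_⟩
  · have : 0 < (2 + 1/α) / Real.log (1+ε) := div_pos (by positivity) hlog
    positivity
  intro x hx r R hr hrR hR1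
  have hx0 : 0 ≤ x := by
    rcases hx with h | ⟨k, hk⟩
    · simp at h; simp [h]
    · rw [hk]; exact tailT_nonneg a hpos k
  have hr2 : (0:ℝ) < 2*r := by linarith
  have hex : ∃ k, a k < 2*r :=
    ((hsum.tendsto_atTop_zero).eventually (eventually_lt_nhds hr2)).exists
  set k1 := Nat.find hex with hk1def
  have hk1 : a k1 < 2*r := Nat.find_spec hex
  have hk1' : ∀ k < k1, 2*r ≤ a k := fun k hk => not_lt.mp (Nat.find_min hex hk)
  have htail : T (k1+1) ≤ 2*r/ε := by
    have h1 := hεa k1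
    rw [le_div_iff₀ hε]
    have : T (k1+1) = ∑' i, a (k1+1+i) := rfl
    nlinarith
  obtain ⟨S0, hS0card, hS0cov⟩ := cover_Icc r (2*r/ε) 0 hr (by positivity)
  set K := (Finset.range k1).filter (fun k => x - R ≤ T k ∧ T k ≤ x + R) with hKdef
  set S : Finset ℝ := (S0 ∪ K.image T) ∪ {T k1} with hSdef
  have tailcov : ∀ z : ℝ, 0 ≤ z → z ≤ 2*r/ε → z ∈ ⋃ y ∈ S, Metric.closedBall y r := by
    intro z h1 h2
    have : z ∈ Set.Icc (0:ℝ) (0 + 2*r/ε) := ⟨h1, by linarith⟩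
    obtain ⟨y, hy, hyz⟩ := Set.mem_iUnion₂.mp (hS0cov this)
    exact Set.mem_iUnion₂.mpr ⟨y, by simp only [hSdef, Finset.mem_union]; tauto, hyz⟩
  have hcov : Metric.closedBall x R ∩ decSet a ⊆ ⋃ y ∈ S, Metric.closedBall y r := by
    rintro z ⟨hzb, hzD⟩
    have hzx : |z - x| ≤ R := by rwa [Metric.mem_closedBall, Real.dist_eq] at hzb
    rw [abs_le] at hzx
    rcases hzD with h0 | ⟨k, hk⟩
    · simp only [Set.mem_singleton_iff] at h0
      subst h0
      exact tailcov 0 le_rfl (by positivity)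
    · have hzT : z = T k := hk
      rcases lt_trichotomy k k1 with h | h | h
      · have hkK : k ∈ K := by
          rw [hKdef, Finset.mem_filter, Finset.mem_range]
          exact ⟨h, by constructor <;> linarith [hzx.1, hzx.2]⟩
        refine Set.mem_iUnion₂.mpr ⟨T k, ?_, ?_⟩
        · simp only [hSdef, Finset.mem_union]
          exact Or.inl (Or.inr (Finset.mem_image.mpr ⟨k, hkK, rfl⟩))
        · simp [hzT, Real.dist_eq, hr.le]
      · refine Set.mem_iUnion₂.mpr ⟨T k1, ?_, ?_⟩
        · simp [hSdef]
        · simp [hzT, h, Real.dist_eq, hr.le]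
      · have h1 : T k ≤ T (k1+1) := by
          rcases eq_or_lt_of_le (Nat.succ_le_of_lt h) with he | hl
          · rw [← he]
          · exact le_of_lt (tailT_anti a hpos hsum hl)
        refine tailcov z (hzT ▸ tailT_nonneg a hpos k) (by linarith [htail, hzT ▸ h1])
  have hcovN : (coverNum r (Metric.closedBall x R ∩ decSet a) : ℝ) ≤ (S.card : ℝ) := by
    have : coverNum r (Metric.closedBall x R ∩ decSet a) ≤ S.card := by
      apply Nat.sInf_le
      exact ⟨S, rfl, hcov⟩
    exact_mod_cast this
  have hScard : (S.card : ℝ) ≤ (1/ε + 1) + (K.card : ℝ) + 1 := by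
    have c1 : S.card ≤ (S0 ∪ K.image T).card + 1 := by
      apply (Finset.card_union_le _ _).trans; simp
    have c2 : (S0 ∪ K.image T).card ≤ S0.card + K.card :=
      (Finset.card_union_le _ _).trans (by gcongr; exact Finset.card_image_le)
    have e : 2*r/ε/(2*r) = 1/ε := by field_simp
    rw [e] at hS0card
    have c1' : (S.card:ℝ) ≤ ((S0 ∪ K.image T).card:ℝ) + 1 := by exact_mod_cast c1
    have c2' : ((S0 ∪ K.image T).card:ℝ) ≤ (S0.card:ℝ) + (K.card:ℝ) := by exact_mod_cast c2
    linarith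
  set β : ℝ := Real.log (3*(R/r)) / Real.log (1+ε) with hβdef
  have ht1 : 1 < R/r := (one_lt_div hr).mpr hrR
  have hβ0 : 0 ≤ β := by
    apply div_nonneg _ hlog.le
    apply Real.log_nonneg; nlinarith
  have hKcard : (K.card : ℝ) ≤ β + 1 := by
    rcases K.eq_empty_or_nonempty with he | hne
    · simp [he]; linarith
    · set km := K.min' hne with hkm
      have hKsub : K ⊆ Finset.Icc km (km + ⌊β⌋₊) := by
        intro k hk
        rw [Finset.mem_Icc]
        refine ⟨K.min'_le k hk, ?_⟩
        have hkmK := K.min'_mem hne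
        obtain ⟨hkr, hkl, hku⟩ := Finset.mem_filter.mp hk
        have hkk1 := Finset.mem_range.mp hkr
        obtain ⟨hkmr, hkml, hkmu⟩ := Finset.mem_filter.mp hkmK
        have hkmle : km ≤ k := K.min'_le k hk
        set n := k - km with hn
        have hkeq : k = km + n := by omega
        have hTk2r : 2*r ≤ T k := by
          have := tailT_succ a hsum k
          have h2 := tailT_nonneg a hpos (k+1)
          have : T k = a k + T (k+1) := this
          linarith [hk1' k hkk1]
        have hTkpos : 0 < T k := lt_of_lt_of_le hr2 hTk2r
        have hgeon : (1+ε)^n * T k ≤ T km := by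
          have := hgeo km n
          rwa [← hkeq] at this
        have hkey : T km ≤ 3*(R/r) * T k := by
          rw [show 3*(R/r) * T k = 3*R*T k/r by ring, le_div_iff₀ hr]
          rcases le_or_gt (2*R) x with hc | hc
          · nlinarith
          · nlinarith
        have hpowle : (1+ε)^n ≤ 3*(R/r) := by
          have h3 : (1+ε)^n * T k ≤ 3*(R/r) * T k := le_trans hgeon hkey
          exact le_of_mul_le_mul_right h3 hTkpos
        have hlogle : (n:ℝ) * Real.log (1+ε) ≤ Real.log (3*(R/r)) := by
          have := Real.log_le_log (by positivity) hpowle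
          rwa [Real.log_pow] at this
        have hnβ : (n:ℝ) ≤ β := by
          rw [hβdef, le_div_iff₀ hlog]
          exact hlogle
        have : n ≤ ⌊β⌋₊ := Nat.le_floor hnβ
        omega
      have hicc : (Finset.Icc km (km + ⌊β⌋₊)).card = ⌊β⌋₊ + 1 := by
        rw [Nat.card_Icc]; omega
      have : (K.card : ℝ) ≤ (⌊β⌋₊ : ℝ) + 1 := by
        exact_mod_cast (Finset.card_le_card hKsub).trans_eq hicc
      linarith [Nat.floor_le hβ0]
  -- final arithmetic
  set t : ℝ := R/r with htdef
  have htpos : 0 < t := by positivity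
  have htα : 1 ≤ t ^ α := Real.one_le_rpow ht1.le hα.le
  have hlogt : Real.log t ≤ t ^ α / α := by
    have h1 : Real.log (t ^ α) ≤ t ^ α - 1 := Real.log_le_sub_one_of_pos (by positivity)
    rw [Real.log_rpow htpos] at h1
    rw [le_div_iff₀ hα]
    nlinarith
  have hlog3 : Real.log (3*t) = Real.log 3 + Real.log t := Real.log_mul (by norm_num) (ne_of_gt htpos)
  have hlog3' : Real.log 3 ≤ 2 := by
    have := Real.log_le_sub_one_of_pos (show (0:ℝ) < 3 by norm_num)
    linarith
  have hβle : β ≤ (2 + 1/α) / Real.log (1+ε) * t ^ α := by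
    rw [hβdef, div_mul_eq_mul_div, div_le_div_iff_of_pos_right hlog]
    rw [hlog3]
    have : Real.log t ≤ 1/α * t^α := by rw [one_div_mul_eq_div]; exact hlogt
    nlinarith
  calc (coverNum r (Metric.closedBall x R ∩ decSet a) : ℝ)
      ≤ (S.card : ℝ) := hcovN
  _ ≤ (1/ε + 1) + (K.card : ℝ) + 1 := hScard
  _ ≤ (1/ε + 3) + β := by linarith
  _ ≤ (1/ε + 3) * t^α + (2 + 1/α) / Real.log (1+ε) * t ^ α := by
      have h1 : 1/ε + 3 ≤ (1/ε + 3) * t^α := by nlinarith [mul_le_mul_of_nonneg_left htα (by positivity : (0:ℝ) ≤ 1/ε + 3)]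
      linarith
  _ = (1/ε + 3 + (2 + 1/α) / Real.log (1+ε)) * t ^ α := by ring

set_option maxHeartbeats 1000000 in
lemma nonlac_ge (a : ℕ → ℝ) (hpos : ∀ n, 0 < a n) (hdec : Antitone a) (hsum : Summable a)
    (hnl : ∀ ε : ℝ, 0 < ε → ∃ j, a j < ε * (∑' i, a (j + 1 + i)))
    (α c ρ : ℝ) (hc : 0 < c) (hρ : 0 < ρ)
    (H : ∀ x ∈ decSet a, ∀ r R : ℝ, 0 < r → r < R → R < ρ →
      (coverNum r (Metric.closedBall x R ∩ decSet a) : ℝ) ≤ c * (R / r) ^ α) :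
    1 ≤ α := by
  classical
  by_contra hα1
  push_neg at hα1
  set T : ℕ → ℝ := fun k => ∑' i, a (k + i) with hTdef
  set γ : ℝ := 1 - α with hγdef
  have hγ : 0 < γ := by simp [hγdef]; linarith
  obtain ⟨J, hJ⟩ : ∃ J, T J < ρ :=
    ((tailT_tendsto a hsum).eventually (eventually_lt_nhds hρ)).exists
  set Q0 : ℝ := max 1 ((4*c) ^ γ⁻¹) + 1 with hQ0def
  clear_value Q0
  have hQ0 : 0 < Q0 := by
    have : (1:ℝ) ≤ max 1 ((4*c) ^ γ⁻¹) := le_max_left _ _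
    linarith
  have hraneJ : (Finset.range (J+1)).Nonempty := ⟨0, Finset.mem_range.mpr (by omega)⟩
  set δm : ℝ := (Finset.range (J+1)).inf' hraneJ (fun j => a j / T (j+1)) with hδmdef
  have hδm : 0 < δm := by
    rw [hδmdef, Finset.lt_inf'_iff]
    intro j _
    exact div_pos (hpos j) (tailT_pos a hpos hsum (j+1))
  set ε : ℝ := min (min (1/2) Q0⁻¹) δm with hεdef
  have hε : 0 < ε := by
    apply lt_min (lt_min (by norm_num) (by positivity)) hδm
  obtain ⟨j, hj⟩ := hnl ε hε
  have hjT : a j < ε * T (j+1) := hj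
  have hTj1 : 0 < T (j+1) := tailT_pos a hpos hsum (j+1)
  have hjJ : J + 1 ≤ j := by
    by_contra h
    push_neg at h
    have h1 : δm ≤ a j / T (j+1) :=
      Finset.inf'_le _ (Finset.mem_range.mpr (by omega))
    have h2 : ε ≤ a j / T (j+1) := le_trans (min_le_right _ _) h1
    rw [le_div_iff₀ hTj1] at h2
    nlinarith
  set R : ℝ := T (j+1) with hRdef
  set r : ℝ := a j with hrdef
  have hr : 0 < r := hpos j
  have hε2 : ε ≤ 1/2 := le_trans (min_le_left _ _) (min_le_left _ _)
  have hrR : r < R := by nlinarith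
  have hRρ : R < ρ := by
    have : T (j+1) ≤ T J := by
      rcases eq_or_lt_of_le (show J ≤ j+1 by omega) with he | hl
      · rw [he]
      · exact le_of_lt (tailT_anti a hpos hsum hl)
    linarith
  have h0D : (0:ℝ) ∈ decSet a := Or.inl rfl
  -- lower bound for any cover
  have hlower : ∀ S : Finset ℝ,
      (Metric.closedBall (0:ℝ) R ∩ decSet a ⊆ ⋃ y ∈ S, Metric.closedBall y r) →
      R ≤ (S.card : ℝ) * (4*r) := by
    intro S hS
    have hIcc : Set.Icc (0:ℝ) R ⊆ ⋃ y ∈ S, Metric.closedBall y (2*r) := by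
      intro z ⟨hz0, hzR⟩
      have hpE : ∃ p, p ∈ Metric.closedBall (0:ℝ) R ∩ decSet a ∧ |z - p| ≤ r := by
        rcases eq_or_lt_of_le hz0 with he | hzpos
        · refine ⟨0, ⟨?_, h0D⟩, by simp [← he, hr.le]⟩
          simp [Metric.mem_closedBall, Real.dist_eq]
          linarith
        · have hexz : ∃ k, T k < z :=
            ((tailT_tendsto a hsum).eventually (eventually_lt_nhds hzpos)).exists
          set ks := Nat.find hexz with hksdef
          have hks : T ks < z := Nat.find_spec hexz
          have hksmin : ∀ m < ks, z ≤ T m := fun m hm => not_lt.mp (Nat.find_min hexz hm)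
          have hks0 : ks ≠ 0 := by
            intro h0
            have : T 0 < z := h0 ▸ hks
            have hT0 : T (j+1) ≤ T 0 := by
              rcases Nat.eq_zero_or_pos (j+1) with he | hl
              · omega
              · exact le_of_lt (tailT_anti a hpos hsum hl)
            linarith
          obtain ⟨k, hkeq⟩ : ∃ k, ks = k + 1 := ⟨ks - 1, by omega⟩
          have hTk : z ≤ T k := hksmin k (by omega)
          have hTk1 : T (k+1) < z := hkeq ▸ hks
          have hkj : j + 1 ≤ k := by
            by_contra hco
            push_neg at hco
            have : T (j+1) ≤ T (k+1) := by
              rcases eq_or_lt_of_le (show k+1 ≤ j+1 by omega) with he | hl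
              · rw [he]
              · exact le_of_lt (tailT_anti a hpos hsum hl)
            linarith
          have hak : a k ≤ a j := hdec (by omega)
          have hTsucc : T k = a k + T (k+1) := tailT_succ a hsum k
          have hTkR : T k ≤ R := by
            rw [hRdef]
            rcases eq_or_lt_of_le hkj with he | hl
            · rw [← he]
            · exact le_of_lt (tailT_anti a hpos hsum hl)
          refine ⟨T k, ⟨?_, Or.inr ⟨k, rfl⟩⟩, ?_⟩
          · simp [Metric.mem_closedBall, Real.dist_eq]
            rw [abs_le]
            constructor <;> nlinarith [tailT_nonneg a hpos k]
          · rw [abs_le]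
            constructor <;> nlinarith
      obtain ⟨p, hpE, hpz⟩ := hpE
      obtain ⟨y, hyS, hyp⟩ := Set.mem_iUnion₂.mp (hS hpE)
      refine Set.mem_iUnion₂.mpr ⟨y, hyS, ?_⟩
      rw [Metric.mem_closedBall] at hyp ⊢
      rw [Real.dist_eq] at hyp ⊢
      have := abs_sub_abs_le_abs_sub (z - y) (z - p)
      calc |z - y| ≤ |z - p| + |p - y| := by
            have := abs_add_le (z - p) (p - y)
            simpa [sub_add_sub_cancel] using this
      _ ≤ 2 * r := by linarith
    have := card_ge_of_cover S (2*r) R (by linarith) hIcc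
    linarith [this]
  -- coverNum is attained
  have hnonempty : ∃ n, n ∈ {n : ℕ | ∃ S : Finset ℝ, S.card = n ∧
      Metric.closedBall (0:ℝ) R ∩ decSet a ⊆ ⋃ x ∈ S, Metric.closedBall x r} := by
    obtain ⟨S, _, hcov⟩ := cover_Icc r (2*R) (-R) hr (by linarith)
    refine ⟨S.card, S, rfl, ?_⟩
    intro z ⟨hzb, _⟩
    apply hcov
    rw [Metric.mem_closedBall, Real.dist_eq, abs_le] at hzb
    constructor <;> [linarith [hzb.1]; linarith [hzb.2]]
  obtain ⟨S, hScard, hScov⟩ := Nat.sInf_mem hnonempty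
  have hlow : R ≤ (coverNum r (Metric.closedBall (0:ℝ) R ∩ decSet a) : ℝ) * (4*r) := by
    have := hlower S hScov
    rw [hScard] at this
    exact this
  have hup := H 0 h0D r R hr hrR hRρ
  set Q : ℝ := R / r with hQdef
  have hQ1 : 1 < Q := (one_lt_div hr).mpr hrR
  have hQpos : 0 < Q := by linarith
  have hQQ0 : Q0 < Q := by
    have hεQ0 : ε ≤ Q0⁻¹ := le_trans (min_le_left _ _) (min_le_right _ _)
    have h1 : Q0 ≤ ε⁻¹ := by
      rw [← inv_inv Q0]
      exact inv_anti₀ hε hεQ0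
    have h2 : ε⁻¹ < Q := by
      rw [hQdef, lt_div_iff₀ hr, inv_mul_lt_iff₀ hε]
      nlinarith
    linarith
  -- combine: Q / 4 ≤ c * Q ^ α
  have hcomb : Q ≤ 4 * c * Q ^ α := by
    have h1 : R / (4*r) ≤ c * Q ^ α := by
      calc R / (4*r) ≤ (coverNum r (Metric.closedBall (0:ℝ) R ∩ decSet a) : ℝ) := by
            rw [div_le_iff₀ (by linarith)]
            exact hlow
      _ ≤ c * Q ^ α := hup
    rw [div_le_iff₀ (by linarith : (0:ℝ) < 4*r)] at h1
    have : Q = R / r := hQdef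
    rw [hQdef]
    rw [div_le_iff₀ hr]
    nlinarith
  have hQα : 0 < Q ^ α := Real.rpow_pos_of_pos hQpos α
  have hQγ : Q ^ γ ≤ 4 * c := by
    have h1 : Q ^ γ * Q ^ α = Q := by
      rw [← Real.rpow_add hQpos]
      simp [hγdef]
    have h2 : Q ^ γ * Q ^ α ≤ (4*c) * Q ^ α := by
      rw [h1]; exact hcomb
    exact le_of_mul_le_mul_right h2 hQα
  have hQγ2 : 4 * c < Q ^ γ := by
    have h4c : (0:ℝ) < 4 * c := by linarith
    have hbase : (4*c) ^ γ⁻¹ < Q := by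
      have : (4*c) ^ γ⁻¹ ≤ max 1 ((4*c) ^ γ⁻¹) := le_max_right _ _
      linarith
    have h2 : ((4*c) ^ γ⁻¹) ^ γ < Q ^ γ :=
      Real.rpow_lt_rpow (Real.rpow_nonneg h4c.le _) hbase hγ
    rwa [← Real.rpow_mul h4c.le, inv_mul_cancel₀ (ne_of_gt hγ), Real.rpow_one] at h2
  linarith

lemma one_mem (F : Set ℝ) :
    ∃ c > (0:ℝ), ∃ ρ > (0:ℝ), ∀ x ∈ F, ∀ r R : ℝ, 0 < r → r < R → R < ρ →
      (coverNum r (Metric.closedBall x R ∩ F) : ℝ) ≤ c * (R / r) ^ (1:ℝ) := by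
  refine ⟨2, by norm_num, 1, one_pos, ?_⟩
  intro x hx r R hr hrR hR
  obtain ⟨S, hcard, hcov⟩ := cover_Icc r (2*R) (x-R) hr (by linarith)
  have h1 : coverNum r (Metric.closedBall x R ∩ F) ≤ S.card := by
    apply Nat.sInf_le
    refine ⟨S, rfl, ?_⟩
    rintro z ⟨hzb, _⟩
    apply hcov
    rw [Metric.mem_closedBall, Real.dist_eq, abs_le] at hzb
    exact ⟨by linarith [hzb.1], by linarith [hzb.2]⟩
  have h2 : (2*R)/(2*r) = R/r := by
    rw [mul_div_mul_left _ _ (by norm_num : (2:ℝ) ≠ 0)]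
  rw [h2] at hcard
  have ht : 1 < R/r := (one_lt_div hr).mpr hrR
  rw [Real.rpow_one]
  calc (coverNum r (Metric.closedBall x R ∩ F) : ℝ) ≤ (S.card : ℝ) := by exact_mod_cast h1
  _ ≤ R/r + 1 := hcard
  _ ≤ 2 * (R/r) := by linarith

lemma mem_nonneg (a : ℕ → ℝ) (α c ρ : ℝ) (hc : 0 < c) (hρ : 0 < ρ)
    (H : ∀ x ∈ decSet a, ∀ r R : ℝ, 0 < r → r < R → R < ρ →
      (coverNum r (Metric.closedBall x R ∩ decSet a) : ℝ) ≤ c * (R / r) ^ α) :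
    0 ≤ α := by
  by_contra hα
  push_neg at hα
  set β : ℝ := -α with hβdef
  have hβ : 0 < β := by simp [hβdef]; linarith
  set t : ℝ := max 2 ((2*c) ^ β⁻¹) with htdef
  clear_value t
  have ht2 : (2:ℝ) ≤ t := htdef ▸ le_max_left _ _
  have ht1 : (1:ℝ) < t := by linarith
  have htpos : (0:ℝ) < t := by linarith
  set R : ℝ := ρ/2 with hRdef
  have hR : 0 < R := by rw [hRdef]; linarith
  set r : ℝ := R/t with hrdef
  have hr : 0 < r := by rw [hrdef]; positivity
  have hrR : r < R := by
    rw [hrdef, div_lt_iff₀ htpos]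
    nlinarith
  have hRρ : R < ρ := by rw [hRdef]; linarith
  have h0D : (0:ℝ) ∈ decSet a := Or.inl rfl
  have hup := H 0 h0D r R hr hrR hRρ
  have hRr : R / r = t := by
    rw [hrdef]
    field_simp
  rw [hRr] at hup
  -- coverNum ≥ 1
  have h0E : (0:ℝ) ∈ Metric.closedBall (0:ℝ) R ∩ decSet a := by
    refine ⟨?_, h0D⟩
    simp [Metric.mem_closedBall, hR.le]
  have hnonempty : ∃ n, n ∈ {n : ℕ | ∃ S : Finset ℝ, S.card = n ∧
      Metric.closedBall (0:ℝ) R ∩ decSet a ⊆ ⋃ x ∈ S, Metric.closedBall x r} := by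
    obtain ⟨S, _, hcov⟩ := cover_Icc r (2*R) (-R) hr (by linarith)
    refine ⟨S.card, S, rfl, ?_⟩
    rintro z ⟨hzb, _⟩
    apply hcov
    rw [Metric.mem_closedBall, Real.dist_eq, abs_le] at hzb
    exact ⟨by linarith [hzb.1], by linarith [hzb.2]⟩
  have hone : 1 ≤ coverNum r (Metric.closedBall (0:ℝ) R ∩ decSet a) := by
    obtain ⟨S, hScard, hScov⟩ := Nat.sInf_mem hnonempty
    have hScard' : S.card = coverNum r (Metric.closedBall (0:ℝ) R ∩ decSet a) := hScard
    rcases Nat.eq_zero_or_pos (coverNum r (Metric.closedBall (0:ℝ) R ∩ decSet a)) with h0 | h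
    · exfalso
      rw [h0, Finset.card_eq_zero] at hScard'
      have := hScov h0E
      rw [hScard'] at this
      simp at this
    · exact h
  -- t ^ α ≤ (2c)⁻¹
  have htβ : 2*c ≤ t ^ β := by
    have h1 : (2*c) ^ β⁻¹ ≤ t := htdef ▸ le_max_right _ _
    have h2 : ((2*c) ^ β⁻¹) ^ β ≤ t ^ β :=
      Real.rpow_le_rpow (Real.rpow_nonneg (by linarith) _) h1 hβ.le
    rwa [← Real.rpow_mul (by linarith : (0:ℝ) ≤ 2*c), inv_mul_cancel₀ (ne_of_gt hβ),
      Real.rpow_one] at h2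
  have htα : t ^ α = (t ^ β)⁻¹ := by
    rw [hβdef, Real.rpow_neg htpos.le, inv_inv]
  have htβpos : 0 < t ^ β := Real.rpow_pos_of_pos htpos β
  have hlt : c * t ^ α ≤ 1/2 := by
    rw [htα]
    rw [mul_inv_le_iff₀ htβpos]
    nlinarith
  have : (1:ℝ) ≤ c * t ^ α := by
    calc (1:ℝ) ≤ (coverNum r (Metric.closedBall (0:ℝ) R ∩ decSet a) : ℝ) := by exact_mod_cast hone
    _ ≤ c * t ^ α := hup
  linarith

end AuxDimA

/-- the Assouad dimension of the decreasing complementary set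
`D_a` is `0` or `1`, and it is `0` iff the sequence is lacunary, i.e. there is
`ε > 0` with `a j ≥ ε Σ_{i>j} a i` for all `j`. -/
theorem dimA_decSet_zero_or_one
    (a : ℕ → ℝ) (hpos : ∀ n, 0 < a n) (hdec : Antitone a) (hsum : Summable a) :
    (dimA (decSet a) = 0 ∨ dimA (decSet a) = 1) ∧
    (dimA (decSet a) = 0 ↔
      ∃ ε : ℝ, 0 < ε ∧ ∀ j : ℕ, ε * (∑' i : ℕ, a (j + 1 + i)) ≤ a j) := by
  classical
  set A : Set ℝ := {α : ℝ | ∃ c > (0 : ℝ), ∃ ρ > (0 : ℝ), ∀ x ∈ decSet a, ∀ r R : ℝ,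
    0 < r → r < R → R < ρ →
    (coverNum r (Metric.closedBall x R ∩ decSet a) : ℝ) ≤ c * (R / r) ^ α} with hAdef
  have hdim : dimA (decSet a) = sInf A := rfl
  have h1A : (1:ℝ) ∈ A := one_mem (decSet a)
  have hA0 : ∀ α ∈ A, (0:ℝ) ≤ α := by
    rintro α ⟨c, hc, ρ, hρ, H⟩
    exact mem_nonneg a α c ρ hc hρ H
  have hbdd : BddBelow A := ⟨0, fun α hα => hA0 α hα⟩
  have hne : A.Nonempty := ⟨1, h1A⟩
  have hge0 : 0 ≤ sInf A := le_csInf hne hA0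
  have hle1 : sInf A ≤ 1 := csInf_le hbdd h1A
  by_cases hl : ∃ ε : ℝ, 0 < ε ∧ ∀ j : ℕ, ε * (∑' i : ℕ, a (j + 1 + i)) ≤ a j
  · obtain ⟨ε, hε, hεa⟩ := hl
    have hmem : ∀ α : ℝ, 0 < α → α ∈ A := fun α hα =>
      lac_mem a hpos hdec hsum ε hε hεa α hα
    have h0 : sInf A = 0 := by
      refine le_antisymm ?_ hge0
      by_contra h
      push_neg at h
      have h2 : sInf A ≤ sInf A / 2 := csInf_le hbdd (hmem _ (by linarith))
      linarith
    rw [hdim]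
    exact ⟨Or.inl h0, ⟨fun _ => ⟨ε, hε, hεa⟩, fun _ => h0⟩⟩
  · have hl' := hl
    push_neg at hl'
    have hnl : ∀ ε : ℝ, 0 < ε → ∃ j, a j < ε * (∑' i, a (j + 1 + i)) := hl'
    have hA1 : ∀ α ∈ A, (1:ℝ) ≤ α := by
      rintro α ⟨c, hc, ρ, hρ, H⟩
      exact nonlac_ge a hpos hdec hsum hnl α c ρ hc hρ H
    have h1 : sInf A = 1 := le_antisymm hle1 (le_csInf hne hA1)
    rw [hdim]
    refine ⟨Or.inr h1, ⟨fun h0 => ?_, fun hlac => absurd hlac hl⟩⟩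
    rw [h1] at h0
    norm_num at h0
end

section
/- Suppose a = {a_k} is a positive, decreasing, summable sequence such that dim_A D_a = 0, where D_a ∈ 𝒞_a is the decreasing complementary set. Then every E ∈ 𝒞_a satisfies dim_A E = 0. -/
open scoped BigOperators
open Set

-- A. upper bound from an explicit cover
lemma aux_covnum_le {r : ℝ} {F : Set ℝ} (S : Finset ℝ)
    (h : F ⊆ ⋃ x ∈ S, Metric.closedBall x r) : coverNum r F ≤ S.card :=
  Nat.sInf_le ⟨S, rfl, h⟩

-- grid cover of an interval
lemma aux_grid_cover {u v r : ℝ} (hr : 0 < r) :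
    Icc u v ⊆ ⋃ x ∈ (Finset.range (⌊(v - u) / (2 * r)⌋₊ + 1)).image
      (fun i : ℕ => u + r + 2 * r * i), Metric.closedBall x r := by
  intro y hy
  have h2r : (0:ℝ) < 2 * r := by linarith
  set i : ℕ := ⌊(y - u) / (2 * r)⌋₊ with hi
  have h0 : (0:ℝ) ≤ (y - u) / (2 * r) := div_nonneg (by linarith [hy.1]) h2r.le
  have hfl : 2 * r * i ≤ y - u := by
    have := Nat.floor_le h0
    calc 2 * r * i ≤ 2 * r * ((y - u) / (2 * r)) := by gcongr
    _ = y - u := by field_simp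
  have hfl2 : y - u < 2 * r * (i + 1) := by
    have h := Nat.lt_floor_add_one ((y - u) / (2 * r))
    calc y - u = 2 * r * ((y - u) / (2 * r)) := by field_simp
    _ < 2 * r * (i + 1) := by
      have h2 : ((y - u) / (2 * r)) < (i : ℝ) + 1 := h
      nlinarith
  have hile : i ≤ ⌊(v - u) / (2 * r)⌋₊ := by
    apply Nat.floor_le_floor
    gcongr
    exact hy.2
  refine mem_iUnion₂.2 ⟨u + r + 2 * r * i, ?_, ?_⟩
  · exact Finset.mem_image.2 ⟨i, Finset.mem_range.2 (Nat.lt_succ_of_le hile), rfl⟩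
  · rw [Metric.mem_closedBall, Real.dist_eq, abs_le]
    constructor <;> [nlinarith; nlinarith]

-- B. the covering set is nonempty for bounded F
lemma aux_coverSet_nonempty {r u v : ℝ} (hr : 0 < r) {F : Set ℝ} (hF : F ⊆ Icc u v) :
    {n : ℕ | ∃ S : Finset ℝ, S.card = n ∧ F ⊆ ⋃ x ∈ S, Metric.closedBall x r}.Nonempty :=
  ⟨_, _, rfl, hF.trans (aux_grid_cover hr)⟩

-- C. existence of minimal cover
lemma aux_covnum_exists {r u v : ℝ} (hr : 0 < r) {F : Set ℝ} (hF : F ⊆ Icc u v) :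
    ∃ S : Finset ℝ, S.card = coverNum r F ∧ F ⊆ ⋃ x ∈ S, Metric.closedBall x r :=
  Nat.sInf_mem (aux_coverSet_nonempty hr hF)

-- D. separated points lower bound
lemma aux_sep_lower {r u v : ℝ} (hr : 0 < r) {F : Set ℝ} (hF : F ⊆ Icc u v)
    (T : Finset ℝ) (hTF : ↑T ⊆ F)
    (hsep : ∀ s ∈ T, ∀ t ∈ T, s ≠ t → 2 * r < |s - t|) :
    T.card ≤ coverNum r F := by
  obtain ⟨S, hScard, hScov⟩ := aux_covnum_exists hr hF
  rw [← hScard]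
  classical
  have hmap : ∀ t ∈ T, ∃ s ∈ S, t ∈ Metric.closedBall s r := by
    intro t ht
    have := hScov (hTF ht)
    simpa using this
  choose f hfS hfB using hmap
  apply Finset.card_le_card_of_injOn (fun t => if h : t ∈ T then f t h else 0)
  · intro t ht; simp only [Finset.mem_coe] at ht; show (if h : t ∈ T then f t h else 0) ∈ S; rw [dif_pos ht]; exact hfS t ht
  · intro s hs t ht hst
    simp only [Finset.mem_coe] at hs ht
    simp only [hs, ht, dif_pos] at hst
    by_contra hne
    have h1 := hfB s hs
    have h2 := hfB t ht
    rw [Metric.mem_closedBall, Real.dist_eq] at h1 h2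
    have := hsep s hs t ht hne
    rw [hst] at h1
    have : |s - t| ≤ 2 * r := by
      calc |s - t| ≤ |s - f t ht| + |f t ht - t| := abs_sub_le _ _ _
      _ ≤ r + r := by rw [abs_sub_comm (f t ht) t]; exact add_le_add h1 h2
      _ = 2 * r := by ring
    linarith [hsep s hs t ht hne]

-- E. chain/measure lower bound: if every point of [u,v] is within r' of F, then
-- v - u ≤ coverNum r F * (2*(r + r'))
lemma aux_chain_upper {r r' u v w z : ℝ} (hr : 0 < r) (hr' : 0 ≤ r') {F : Set ℝ}
    (hF : F ⊆ Icc w z)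
    (hdense : ∀ y ∈ Icc u v, ∃ t ∈ F, |y - t| ≤ r') :
    v - u ≤ (coverNum r F : ℝ) * (2 * (r + r')) := by
  obtain ⟨S, hScard, hScov⟩ := aux_covnum_exists hr hF
  have hcov2 : Icc u v ⊆ ⋃ x ∈ S, Metric.closedBall x (r + r') := by
    intro y hy
    obtain ⟨t, htF, hyt⟩ := hdense y hy
    have := hScov htF
    simp only [mem_iUnion, exists_prop] at this ⊢
    obtain ⟨s, hsS, hts⟩ := this
    refine ⟨s, hsS, ?_⟩
    rw [Metric.mem_closedBall, Real.dist_eq] at hts ⊢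
    calc |y - s| ≤ |y - t| + |t - s| := abs_sub_le _ _ _
    _ ≤ r' + r := add_le_add hyt hts
    _ = r + r' := by ring
  have hμ : (MeasureTheory.volume (Icc u v)) ≤
      S.card * ENNReal.ofReal (2 * (r + r')) := by
    calc MeasureTheory.volume (Icc u v)
        ≤ MeasureTheory.volume (⋃ x ∈ S, Metric.closedBall x (r + r')) :=
          MeasureTheory.measure_mono hcov2
      _ ≤ ∑ x ∈ S, MeasureTheory.volume (Metric.closedBall x (r + r')) :=
          MeasureTheory.measure_biUnion_finset_le S _
      _ = ∑ x ∈ S, ENNReal.ofReal (2 * (r + r')) := by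
          refine Finset.sum_congr rfl fun x _ => ?_
          rw [Real.volume_closedBall]
      _ = S.card * ENNReal.ofReal (2 * (r + r')) := by
          rw [Finset.sum_const, nsmul_eq_mul]
  rcases le_or_gt (v - u) 0 with h | h
  · have : (0:ℝ) ≤ (coverNum r F : ℝ) * (2 * (r + r')) := by positivity
    linarith
  · rw [Real.volume_Icc] at hμ
    have h2 : ENNReal.ofReal (v - u) ≤ ENNReal.ofReal ((S.card : ℝ) * (2 * (r + r'))) := by
      rw [ENNReal.ofReal_mul (by positivity)]
      simpa using hμ
    rw [ENNReal.ofReal_le_ofReal_iff (by positivity)] at h2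
    rw [← hScard]
    exact h2

-- F. the trivial covering bound: 1 is in the defining set of dimA
lemma aux_one_mem (F : Set ℝ) :
    (1:ℝ) ∈ {α : ℝ | ∃ c > (0 : ℝ), ∃ ρ > (0 : ℝ), ∀ x ∈ F, ∀ r R : ℝ,
      0 < r → r < R → R < ρ →
      (coverNum r (Metric.closedBall x R ∩ F) : ℝ) ≤ c * (R / r) ^ α} := by
  refine ⟨2, by norm_num, 1, by norm_num, fun x hx r R hr hrR hRρ => ?_⟩
  have hsub : Metric.closedBall x R ∩ F ⊆ Icc (x - R) (x + R) := by
    rw [Real.closedBall_eq_Icc]; exact inter_subset_left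
  have hcov := hsub.trans (aux_grid_cover (u := x - R) (v := x + R) hr)
  have h1 := aux_covnum_le _ hcov
  have hcard : ((Finset.range (⌊(x + R - (x - R)) / (2 * r)⌋₊ + 1)).image
      (fun i : ℕ => (x - R) + r + 2 * r * i)).card ≤ ⌊(x + R - (x - R)) / (2 * r)⌋₊ + 1 :=
    (Finset.card_image_le).trans (by rw [Finset.card_range])
  have hR0 : 0 < R := hr.trans hrR
  have hfloor : ((⌊(x + R - (x - R)) / (2 * r)⌋₊ : ℝ) + 1) ≤ 2 * (R / r) := by
    have he : (x + R - (x - R)) / (2 * r) = R / r := by field_simp; ring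
    rw [he]
    have h2 : (⌊R / r⌋₊ : ℝ) ≤ R / r := Nat.floor_le (by positivity)
    have h3 : (1:ℝ) ≤ R / r := (one_le_div hr).2 hrR.le
    linarith
  have : (coverNum r (Metric.closedBall x R ∩ F) : ℝ) ≤ 2 * (R / r) := by
    calc (coverNum r (Metric.closedBall x R ∩ F) : ℝ)
        ≤ ((⌊(x + R - (x - R)) / (2 * r)⌋₊ : ℝ) + 1) := by exact_mod_cast h1.trans hcard
      _ ≤ 2 * (R / r) := hfloor
  rwa [Real.rpow_one]

-- G. members of the defining set are nonnegative when F is nonempty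
lemma aux_mem_nonneg {F : Set ℝ} {x₀ : ℝ} (hx₀ : x₀ ∈ F) {β : ℝ}
    (hβ : β ∈ {α : ℝ | ∃ c > (0 : ℝ), ∃ ρ > (0 : ℝ), ∀ x ∈ F, ∀ r R : ℝ,
      0 < r → r < R → R < ρ →
      (coverNum r (Metric.closedBall x R ∩ F) : ℝ) ≤ c * (R / r) ^ α}) :
    0 ≤ β := by
  by_contra hneg
  push_neg at hneg
  obtain ⟨c, hc, ρ, hρ, hbound⟩ := hβ
  set t : ℝ := max 2 (c ^ (1 / (-β)) + 1) with ht
  have ht2 : (2:ℝ) ≤ t := le_max_left _ _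
  have ht0 : (0:ℝ) < t := by linarith
  have hct : c < t ^ (-β) := by
    have h1 : c ^ (1 / (-β)) < t := lt_of_lt_of_le (lt_add_one _) (le_max_right _ _)
    have h2 : (c ^ (1 / (-β))) ^ (-β) < t ^ (-β) :=
      Real.rpow_lt_rpow (Real.rpow_nonneg hc.le _) h1 (by linarith)
    rwa [← Real.rpow_mul hc.le, one_div, inv_mul_cancel₀ (by linarith), Real.rpow_one] at h2
  set R : ℝ := ρ / 2 with hR
  have hR0 : 0 < R := by positivity
  set r : ℝ := R / t with hr
  have hr0 : 0 < r := by positivity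
  have hrR : r < R := by
    rw [hr, div_lt_iff₀ ht0]; nlinarith
  have hRρ : R < ρ := by rw [hR]; linarith
  have hb := hbound x₀ hx₀ r R hr0 hrR hRρ
  have hRr : R / r = t := by rw [hr]; field_simp
  rw [hRr] at hb
  -- coverNum ≥ 1
  have hsub : Metric.closedBall x₀ R ∩ F ⊆ Icc (x₀ - R) (x₀ + R) := by
    rw [Real.closedBall_eq_Icc]; exact inter_subset_left
  obtain ⟨S, hScard, hScov⟩ := aux_covnum_exists hr0 hsub
  have hxin : x₀ ∈ Metric.closedBall x₀ R ∩ F :=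
    ⟨Metric.mem_closedBall_self hR0.le, hx₀⟩
  have hS1 : 1 ≤ coverNum r (Metric.closedBall x₀ R ∩ F) := by
    rcases Nat.eq_zero_or_pos (coverNum r (Metric.closedBall x₀ R ∩ F)) with h | h
    · exfalso
      rw [h] at hScard
      have hSempty : S = ∅ := Finset.card_eq_zero.1 hScard
      have := hScov hxin
      rw [hSempty] at this
      simpa using this
    · exact h
  have h1le : (1:ℝ) ≤ c * t ^ β := le_trans (by exact_mod_cast hS1) hb
  have htβ : t ^ β = (t ^ (-β))⁻¹ := by
    rw [Real.rpow_neg ht0.le, inv_inv]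
  have htneg : (0:ℝ) < t ^ (-β) := Real.rpow_pos_of_pos ht0 _
  rw [htβ] at h1le
  have : t ^ (-β) ≤ c := by
    rw [← div_eq_mul_inv, le_div_iff₀ htneg, one_mul] at h1le
    exact h1le
  linarith

section Tails
variable (a : ℕ → ℝ)

noncomputable def auxT (k : ℕ) : ℝ := ∑' i, a (k + i)

variable {a}

lemma aux_summable_shift (hsum : Summable a) (k : ℕ) : Summable (fun i => a (k + i)) := by
  have := (summable_nat_add_iff k).2 hsum
  simpa [add_comm] using this

lemma aux_T_nonneg (hnn : ∀ n, 0 ≤ a n) (k : ℕ) : 0 ≤ auxT a k :=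
  tsum_nonneg (fun i => hnn _)

lemma aux_T_block (hsum : Summable a) (k d : ℕ) :
    auxT a k = (∑ i ∈ Finset.range d, a (k + i)) + auxT a (k + d) := by
  have h := Summable.sum_add_tsum_nat_add (f := fun i => a (k + i)) d (aux_summable_shift hsum k)
  rw [auxT, ← h]
  congr 1
  rw [auxT]
  apply tsum_congr
  intro n
  congr 1
  omega

lemma aux_T_diff (hsum : Summable a) {u v : ℕ} (huv : u ≤ v) :
    auxT a u - auxT a v = ∑ i ∈ Finset.Ico u v, a i := by
  have h := aux_T_block hsum u (v - u)
  rw [Finset.sum_Ico_eq_sum_range]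
  have : u + (v - u) = v := by omega
  rw [this] at h
  linarith [h]

lemma aux_T_le (hsum : Summable a) (hnn : ∀ n, 0 ≤ a n) {u v : ℕ} (huv : u ≤ v) :
    auxT a v ≤ auxT a u := by
  have := aux_T_diff hsum huv
  have h2 : 0 ≤ ∑ i ∈ Finset.Ico u v, a i := Finset.sum_nonneg (fun i _ => hnn i)
  linarith

end Tails

-- rearrangement: sum over the top block of card J indices below the max is ≤ sum over J
lemma aux_rearrange {a : ℕ → ℝ} (hdec : Antitone a) (J : Finset ℕ) (hne : J.Nonempty) :
    ∑ t ∈ Finset.Ico (J.max' hne + 1 - J.card) (J.max' hne + 1), a t ≤ ∑ j ∈ J, a j := by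
  classical
  set m := J.max' hne with hm
  set N := J.card with hN
  have hJsub : J ⊆ Finset.range (m + 1) := by
    intro j hj; exact Finset.mem_range.2 (Nat.lt_succ_of_le (J.le_max' j hj))
  have hNm : N ≤ m + 1 := by
    have := Finset.card_le_card hJsub
    simpa using this
  set B := Finset.Ico (m + 1 - N) (m + 1) with hB
  have hBcard : B.card = N := by
    rw [hB, Nat.card_Ico]; omega
  have hsplitJ : ∑ j ∈ J ∩ B, a j + ∑ j ∈ J \ B, a j = ∑ j ∈ J, a j :=
    Finset.sum_inter_add_sum_sdiff J B a
  have hsplitB : ∑ j ∈ B ∩ J, a j + ∑ j ∈ B \ J, a j = ∑ j ∈ B, a j :=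
    Finset.sum_inter_add_sum_sdiff B J a
  have hcardeq : (J \ B).card = (B \ J).card := by
    have h1 := Finset.card_inter_add_card_sdiff J B
    have h2 := Finset.card_inter_add_card_sdiff B J
    rw [Finset.inter_comm B J] at h2
    omega
  have hbound1 : ∑ j ∈ B \ J, a j ≤ (B \ J).card • a (m + 1 - N) := by
    apply Finset.sum_le_card_nsmul
    intro t ht
    have := (Finset.mem_sdiff.1 ht).1
    rw [hB, Finset.mem_Ico] at this
    exact hdec this.1
  have hbound2 : (J \ B).card • a (m + 1 - N) ≤ ∑ j ∈ J \ B, a j := by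
    apply Finset.card_nsmul_le_sum
    intro j hj
    have hjJ := (Finset.mem_sdiff.1 hj).1
    have hjB := (Finset.mem_sdiff.1 hj).2
    have hjm : j ≤ m := J.le_max' j hjJ
    have : j < m + 1 - N := by
      rw [hB, Finset.mem_Ico] at hjB
      omega
    exact hdec (by omega)
  rw [hcardeq] at hbound2
  calc ∑ t ∈ B, a t = ∑ j ∈ B ∩ J, a j + ∑ j ∈ B \ J, a j := hsplitB.symm
    _ ≤ ∑ j ∈ B ∩ J, a j + ∑ j ∈ J \ B, a j := by
        have := hbound1.trans hbound2
        linarith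
    _ = ∑ j ∈ J, a j := by rw [Finset.inter_comm]; exact hsplitJ

lemma aux_T_mem_decSet (a : ℕ → ℝ) (k : ℕ) : auxT a k ∈ decSet a :=
  Or.inr ⟨k, rfl⟩

-- BIG: count of large disjoint gaps in a window, via the decreasing set
lemma aux_big_count {a : ℕ → ℝ} (hpos : ∀ n, 0 < a n) (hdec : Antitone a)
    (hsum : Summable a) {c ρ α r R : ℝ} (hc : 0 < c) (hα : 0 ≤ α)
    (hD' : ∀ x ∈ decSet a, ∀ r' R' : ℝ, 0 < r' → r' < R' → R' < ρ →
      (coverNum r' (Metric.closedBall x R' ∩ decSet a) : ℝ) ≤ c * (R' / r') ^ α)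
    (hr : 0 < r) (hrR : r < R) (hRρ : 6 * R < ρ)
    (Jin : Finset ℕ) (hJr : ∀ j ∈ Jin, r ≤ a j)
    (hJsum : ∑ j ∈ Jin, a j ≤ 6 * R) :
    (Jin.card : ℝ) ≤ c * (24:ℝ) ^ α * (R / r) ^ α := by
  classical
  have hR0 : 0 < R := hr.trans hrR
  have hQpos : (0:ℝ) < (R / r) ^ α := Real.rpow_pos_of_pos (by positivity) _
  rcases Finset.eq_empty_or_nonempty Jin with hJe | hne
  · rw [hJe]; simp; positivity
  set m := Jin.max' hne with hm
  set N := Jin.card with hN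
  have hNm : N ≤ m + 1 := by
    have hsubJ : Jin ⊆ Finset.range (m + 1) := fun j hj =>
      Finset.mem_range.2 (Nat.lt_succ_of_le (Jin.le_max' j hj))
    have := Finset.card_le_card hsubJ
    simpa using this
  have hblock : ∑ t ∈ Finset.Ico (m + 1 - N) (m + 1), a t ≤ 6 * R :=
    (aux_rearrange hdec Jin hne).trans hJsum
  have ham : r ≤ a m := hJr m (Jin.max'_mem hne)
  -- the N+1 points
  set x₀ := auxT a (m + 1) with hx₀
  set F := Metric.closedBall x₀ (6 * R) ∩ decSet a with hF
  have hFsub : F ⊆ Icc (x₀ - 6 * R) (x₀ + 6 * R) := by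
    rw [hF, Real.closedBall_eq_Icc]; exact inter_subset_left
  have hdiff : ∀ t ≤ N, auxT a (m + 1 - N + t) - auxT a (m + 1) =
      ∑ i ∈ Finset.Ico (m + 1 - N + t) (m + 1), a i := fun t ht =>
    aux_T_diff hsum (by omega)
  have hdiffle : ∀ t ≤ N, auxT a (m + 1 - N + t) - auxT a (m + 1) ≤ 6 * R := by
    intro t ht
    rw [hdiff t ht]
    refine le_trans (Finset.sum_le_sum_of_subset_of_nonneg ?_ ?_) hblock
    · exact Finset.Ico_subset_Ico (by omega) le_rfl
    · intro i _ _; exact (hpos i).le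
  have hsep : ∀ s t : ℕ, s < t → t ≤ N →
      r ≤ auxT a (m + 1 - N + s) - auxT a (m + 1 - N + t) := by
    intro s t hst htN
    rw [aux_T_diff hsum (by omega)]
    have hmem : m + 1 - N + t - 1 ∈ Finset.Ico (m + 1 - N + s) (m + 1 - N + t) := by
      rw [Finset.mem_Ico]; omega
    refine le_trans ?_ (Finset.single_le_sum (fun i _ => (hpos i).le) hmem)
    exact ham.trans (hdec (by omega))
  set Pts : Finset ℝ :=
    (Finset.range (N + 1)).image (fun t => auxT a (m + 1 - N + t)) with hPts
  have hPtscard : Pts.card = N + 1 := by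
    rw [hPts, Finset.card_image_of_injOn, Finset.card_range]
    intro s hs t ht hst
    have hst' : auxT a (m + 1 - N + s) = auxT a (m + 1 - N + t) := hst
    simp only [Finset.coe_range, Set.mem_Iio] at hs ht
    by_contra hne'
    rcases Nat.lt_or_ge s t with h | h
    · have := hsep s t h (by omega); rw [hst'] at this; linarith
    · have h' : t < s := by omega
      have := hsep t s h' (by omega); rw [hst'] at this; linarith
  have hPtsF : ↑Pts ⊆ F := by
    intro p hp
    rw [hPts] at hp
    simp only [Finset.coe_image, Set.mem_image, Finset.coe_range, Set.mem_Iio] at hp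
    obtain ⟨t, ht, rfl⟩ := hp
    have htN : t ≤ N := by omega
    constructor
    · rw [Metric.mem_closedBall, Real.dist_eq, abs_le]
      have h1 := hdiffle t htN
      have h2 : 0 ≤ auxT a (m + 1 - N + t) - auxT a (m + 1) := by
        rw [hdiff t htN]
        exact Finset.sum_nonneg (fun i _ => (hpos i).le)
      constructor <;> [linarith; linarith]
    · exact aux_T_mem_decSet a _
  have hsep2 : ∀ p ∈ Pts, ∀ q ∈ Pts, p ≠ q → 2 * (r / 4) < |p - q| := by
    intro p hp q hq hpq
    rw [hPts] at hp hq
    simp only [Finset.mem_image, Finset.mem_range] at hp hq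
    obtain ⟨s, hs, rfl⟩ := hp
    obtain ⟨t, ht, rfl⟩ := hq
    rcases Nat.lt_or_ge s t with h | h
    · have := hsep s t h (by omega)
      rw [abs_of_nonneg (by linarith)]
      linarith
    · have h' : t < s := by
        rcases Nat.lt_or_ge t s with h2 | h2
        · exact h2
        · exact absurd (by omega : s = t) (fun he => hpq (by rw [he]))
      have := hsep t s h' (by omega)
      rw [abs_of_nonpos (by linarith)]
      linarith
  have hcount := aux_sep_lower (by positivity : (0:ℝ) < r / 4) hFsub Pts hPtsF hsep2
  have hcov := hD' x₀ (aux_T_mem_decSet a _) (r / 4) (6 * R)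
    (by positivity) (by linarith) hRρ
  have hratio : 6 * R / (r / 4) = 24 * (R / r) := by field_simp; ring
  rw [hratio] at hcov
  have hrw : (24 * (R / r)) ^ α = (24:ℝ) ^ α * (R / r) ^ α :=
    Real.mul_rpow (by norm_num) (by positivity)
  rw [hrw] at hcov
  have : (N : ℝ) + 1 ≤ c * ((24:ℝ) ^ α * (R / r) ^ α) := by
    calc (N : ℝ) + 1 = (Pts.card : ℝ) := by rw [hPtscard]; push_cast; ring
    _ ≤ (coverNum (r / 4) F : ℝ) := by exact_mod_cast hcount
    _ ≤ c * ((24:ℝ) ^ α * (R / r) ^ α) := hcov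
  have := this
  nlinarith [hQpos, hc]

-- SMALL: total mass of small gaps in a window, via the decreasing set
lemma aux_small_mass {a : ℕ → ℝ} (hpos : ∀ n, 0 < a n) (hdec : Antitone a)
    (hsum : Summable a) {c ρ α r R : ℝ} (hc : 0 < c) (hα : 0 ≤ α)
    (hD' : ∀ x ∈ decSet a, ∀ r' R' : ℝ, 0 < r' → r' < R' → R' < ρ →
      (coverNum r' (Metric.closedBall x R' ∩ decSet a) : ℝ) ≤ c * (R' / r') ^ α)
    (hr : 0 < r) (hrR : r < R) (hRρ : 8 * R < ρ)
    {G : ℝ} (hG0 : 0 ≤ G) {n₀ : ℕ} (hn₀ : a n₀ < r)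
    (hGT : G ≤ auxT a n₀) (hG4R : G ≤ 6 * R) :
    G ≤ r * (4 * c * (8:ℝ) ^ α * (R / r) ^ α + 1) := by
  classical
  have hR0 : 0 < R := hr.trans hrR
  have hQpos : (0:ℝ) < (R / r) ^ α := Real.rpow_pos_of_pos (by positivity) _
  have h8pos : (0:ℝ) < (8:ℝ) ^ α := Real.rpow_pos_of_pos (by norm_num) _
  have hbr0 : (0:ℝ) ≤ 4 * c * (8:ℝ) ^ α * (R / r) ^ α := by positivity
  have hbr : (1:ℝ) ≤ 4 * c * (8:ℝ) ^ α * (R / r) ^ α + 1 := by linarith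
  set ℓ : ℕ → ℝ := fun M => ∑ i ∈ Finset.range M, a (n₀ + i) with hℓ
  have hℓmono : Monotone ℓ := by
    intro s t hst
    exact Finset.sum_le_sum_of_subset_of_nonneg (Finset.range_subset_range.2 hst)
      (fun i _ _ => (hpos _).le)
  have hsmall : ∀ i, a (n₀ + i) < r := fun i => lt_of_le_of_lt (hdec (by omega)) hn₀
  have htend : Filter.Tendsto ℓ Filter.atTop (nhds (auxT a n₀)) :=
    (aux_summable_shift hsum n₀).hasSum.tendsto_sum_nat
  have hex : ∃ M, G - r < ℓ M := by
    by_contra hcon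
    push_neg at hcon
    have : auxT a n₀ ≤ G - r := le_of_tendsto htend (Filter.Eventually.of_forall hcon)
    linarith
  set M₀ := Nat.find hex with hM₀
  have hM₀p : G - r < ℓ M₀ := Nat.find_spec hex
  rcases Nat.eq_zero_or_pos M₀ with hM0 | hM0
  · rw [hM0] at hM₀p
    simp only [hℓ, Finset.range_zero, Finset.sum_empty] at hM₀p
    have hGr : G < r := by linarith
    nlinarith
  · have hprev : ¬ (G - r < ℓ (M₀ - 1)) := Nat.find_min hex (by omega)
    push_neg at hprev
    have hstep : ℓ M₀ = ℓ (M₀ - 1) + a (n₀ + (M₀ - 1)) := by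
      have hM : M₀ = (M₀ - 1) + 1 := by omega
      calc ℓ M₀ = ℓ ((M₀ - 1) + 1) := by rw [← hM]
      _ = ℓ (M₀ - 1) + a (n₀ + (M₀ - 1)) := Finset.sum_range_succ _ _
    have hℓM4R : ℓ M₀ < G := by
      have := hsmall (M₀ - 1)
      rw [hstep]; linarith
    -- the chain of points
    have hTdiff : ∀ i, auxT a n₀ - auxT a (n₀ + i) = ℓ i := by
      intro i
      rw [aux_T_diff hsum (by omega), hℓ, Finset.sum_Ico_eq_sum_range]
      simp
    set F := Metric.closedBall (auxT a n₀) (8 * R) ∩ decSet a with hFdef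
    have hFsub : F ⊆ Icc (auxT a n₀ - 8 * R) (auxT a n₀ + 8 * R) := by
      rw [hFdef, Real.closedBall_eq_Icc]; exact inter_subset_left
    have hchainmem : ∀ i ≤ M₀, auxT a (n₀ + i) ∈ F := by
      intro i hi
      have h1 : auxT a n₀ - auxT a (n₀ + i) = ℓ i := hTdiff i
      have h2 : ℓ i ≤ ℓ M₀ := hℓmono hi
      have h3 : 0 ≤ ℓ i := Finset.sum_nonneg (fun j _ => (hpos _).le)
      refine ⟨?_, aux_T_mem_decSet a _⟩
      rw [Metric.mem_closedBall, Real.dist_eq, abs_le]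
      constructor <;> [linarith; linarith]
    have hdense : ∀ y ∈ Icc (auxT a (n₀ + M₀)) (auxT a n₀), ∃ t ∈ F, |y - t| ≤ r := by
      intro y hy
      have hex2 : ∃ i, auxT a (n₀ + i + 1) ≤ y := by
        refine ⟨M₀ - 1, ?_⟩
        have : n₀ + (M₀ - 1) + 1 = n₀ + M₀ := by omega
        rw [this]; exact hy.1
      set i₀ := Nat.find hex2 with hi₀
      have hspec : auxT a (n₀ + i₀ + 1) ≤ y := Nat.find_spec hex2
      have hi₀le : i₀ ≤ M₀ - 1 := Nat.find_le (by
        have : n₀ + (M₀ - 1) + 1 = n₀ + M₀ := by omega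
        rw [this]; exact hy.1)
      have hyle : y ≤ auxT a (n₀ + i₀) := by
        rcases Nat.eq_zero_or_pos i₀ with h0 | h0
        · rw [h0]; simpa using hy.2
        · have := Nat.find_min hex2 (by omega : i₀ - 1 < i₀)
          push_neg at this
          have he : n₀ + (i₀ - 1) + 1 = n₀ + i₀ := by omega
          rw [he] at this
          exact this.le
      refine ⟨auxT a (n₀ + i₀), hchainmem i₀ (by omega), ?_⟩
      have hgap : auxT a (n₀ + i₀) - auxT a (n₀ + i₀ + 1) = a (n₀ + i₀) := by
        have := aux_T_diff hsum (by omega : n₀ + i₀ ≤ n₀ + i₀ + 1)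
        simpa using this
      rw [abs_le]
      constructor
      · have := hsmall i₀
        linarith
      · have h3 : 0 < a (n₀ + i₀) := hpos _
        linarith [hsmall i₀]
    have hchain := aux_chain_upper hr (le_of_lt hr) hFsub hdense
    have hcov := hD' (auxT a n₀) (aux_T_mem_decSet a _) r (8 * R)
      hr (by linarith) hRρ
    have hratio : 8 * R / r = 8 * (R / r) := by ring
    rw [hratio] at hcov
    have hrw : (8 * (R / r)) ^ α = (8:ℝ) ^ α * (R / r) ^ α :=
      Real.mul_rpow (by norm_num) (by positivity)
    rw [hrw] at hcov
    have hlen : auxT a n₀ - auxT a (n₀ + M₀) = ℓ M₀ := hTdiff M₀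
    have hfin : ℓ M₀ ≤ (coverNum r F : ℝ) * (2 * (r + r)) := by
      rw [← hlen]; exact hchain
    have : G - r < (c * ((8:ℝ) ^ α * (R / r) ^ α)) * (4 * r) := by
      calc G - r < ℓ M₀ := hM₀p
      _ ≤ (coverNum r F : ℝ) * (2 * (r + r)) := hfin
      _ ≤ (c * ((8:ℝ) ^ α * (R / r) ^ α)) * (2 * (r + r)) := by
          apply mul_le_mul_of_nonneg_right hcov (by positivity)
      _ = (c * ((8:ℝ) ^ α * (R / r) ^ α)) * (4 * r) := by ring
    nlinarith


-- finite partial sums of a tail are bounded by the tail sum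
lemma aux_tail_sum {a : ℕ → ℝ} (hpos : ∀ n, 0 < a n) (hsum : Summable a)
    (n₀ : ℕ) (s : Finset ℕ) (hs : ∀ j ∈ s, n₀ ≤ j) :
    ∑ j ∈ s, a j ≤ auxT a n₀ := by
  classical
  have h1 : ∑ j ∈ s, a j = ∑ i ∈ s.image (fun j => j - n₀), a (n₀ + i) := by
    rw [Finset.sum_image]
    · apply Finset.sum_congr rfl
      intro j hj
      congr 1
      have := hs j hj
      omega
    · intro u hu v hv huv
      have h1 := hs u hu
      have h2 := hs v hv
      simp only at huv
      omega
  rw [h1]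
  exact Summable.sum_le_tsum _ (fun i _ => (hpos _).le) (aux_summable_shift hsum n₀)

-- CORE: covering number bound for a window of a complementary set E
set_option maxHeartbeats 2000000 in
lemma aux_core {a : ℕ → ℝ} (hpos : ∀ n, 0 < a n) (hdec : Antitone a)
    (hsum : Summable a) {c ρ α : ℝ} (hc : 0 < c) (hα : 0 ≤ α)
    (hD' : ∀ x ∈ decSet a, ∀ r' R' : ℝ, 0 < r' → r' < R' → R' < ρ →
      (coverNum r' (Metric.closedBall x R' ∩ decSet a) : ℝ) ≤ c * (R' / r') ^ α)
    {E : Set ℝ} {U : ℕ → Set ℝ} {P Q : ℕ → ℝ}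
    (hPQ : ∀ n, P n < Q n) (hlen : ∀ n, Q n - P n = a n)
    (hUeq : ∀ n, U n = Set.Ioo (P n) (Q n))
    (hUsub : ∀ n, U n ⊆ Set.Icc 0 (∑' i, a i))
    (hdisj : Pairwise (Function.onFun Disjoint U))
    (hEeq : E = Set.Icc 0 (∑' i, a i) \ ⋃ n, U n)
    {x r R : ℝ} (hx : x ∈ E) (hr : 0 < r) (hrR : r < R) (hRρ : 8 * R < ρ) :
    (coverNum r (Metric.closedBall x R ∩ E) : ℝ) ≤
      (7 + 6 * c * (24:ℝ) ^ α) * (R / r) ^ α := by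
  classical
  have hR0 : 0 < R := hr.trans hrR
  have hQ1 : (1:ℝ) ≤ (R / r) ^ α :=
    Real.one_le_rpow ((one_le_div hr).2 hrR.le) hα
  have hQpos : (0:ℝ) < (R / r) ^ α := by linarith
  set L := ∑' i, a i with hL
  have hμU : ∀ j, MeasureTheory.volume (U j) = ENNReal.ofReal (a j) := by
    intro j; rw [hUeq, Real.volume_Ioo, hlen]
  have hUmeas : ∀ j, MeasurableSet (U j) := by
    intro j; rw [hUeq]; exact measurableSet_Ioo
  have hμE : MeasureTheory.volume E = 0 := by
    rw [hEeq]
    have hsub : (⋃ n, U n) ⊆ Icc 0 L := iUnion_subset hUsub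
    have hμUnion : MeasureTheory.volume (⋃ n, U n) = ENNReal.ofReal L := by
      rw [MeasureTheory.measure_iUnion hdisj hUmeas]
      rw [tsum_congr (fun j => hμU j)]
      exact (ENNReal.ofReal_tsum_of_nonneg (fun n => (hpos n).le) hsum).symm
    rw [MeasureTheory.measure_diff hsub (MeasurableSet.iUnion hUmeas).nullMeasurableSet
      (by rw [hμUnion]; exact ENNReal.ofReal_ne_top)]
    rw [hμUnion, Real.volume_Icc, sub_zero, tsub_self]
  -- cells
  set n : ℕ := ⌊R / r⌋₊ + 1 with hn
  set l : ℕ → ℝ := fun i => x - R + 2 * r * i with hl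
  set cell : ℕ → Set ℝ := fun i => Ico (l i) (l (i + 1)) with hcell
  have hlstep : ∀ i : ℕ, l (i + 1) = l i + 2 * r := by
    intro i; rw [hl]; push_cast; ring
  have hlmono : ∀ {i j : ℕ}, i ≤ j → l i ≤ l j := by
    intro i j hij
    rw [hl]
    simp only
    have : (i:ℝ) ≤ j := by exact_mod_cast hij
    nlinarith
  have hcelldisj : ∀ i j : ℕ, i ≠ j → Disjoint (cell i) (cell j) := by
    intro i j hij
    rw [Set.disjoint_left]
    intro y hyi hyj
    rcases Nat.lt_or_ge i j with h | h
    · have h1 : y < l (i + 1) := hyi.2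
      have h2 : l j ≤ y := hyj.1
      have := hlmono (by omega : i + 1 ≤ j)
      linarith
    · have hji : j < i := by omega
      have h1 : y < l (j + 1) := hyj.2
      have h2 : l i ≤ y := hyi.1
      have := hlmono (by omega : j + 1 ≤ i)
      linarith
  have hcellmeas : ∀ i, MeasurableSet (cell i) := fun i => measurableSet_Ico
  have hμcell : ∀ i, MeasureTheory.volume (cell i) = ENNReal.ofReal (2 * r) := by
    intro i; rw [hcell]
    simp only [Real.volume_Ico, hlstep]
    ring_nf
  have hcellWide : ∀ i < n, cell i ⊆ Icc (x - 3 * R) (x + 3 * R) := by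
    intro i hi y hy
    have h1 : l 0 ≤ y := le_trans (hlmono (Nat.zero_le i)) hy.1
    have h2 : y < l n := lt_of_lt_of_le hy.2 (hlmono (by omega : i + 1 ≤ n))
    have hl0 : l 0 = x - R := by rw [hl]; simp
    have hln : l n ≤ x + 3 * R := by
      rw [hl]
      simp only
      have hfl : (n : ℝ) ≤ R / r + 1 := by
        rw [hn]; push_cast
        have := Nat.floor_le (by positivity : (0:ℝ) ≤ R / r)
        linarith
      have : 2 * r * n ≤ 2 * r * (R / r + 1) := by nlinarith
      have he : 2 * r * (R / r + 1) = 2 * R + 2 * r := by field_simp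
      nlinarith
    constructor <;> [linarith; linarith]
  -- the cover by relevant cells
  set Relevant : Finset ℕ :=
    (Finset.range n).filter (fun i => (cell i ∩ E).Nonempty) with hRel
  set Scover : Finset ℝ := Relevant.image (fun i => l i + r) with hSc
  have hcovS : Metric.closedBall x R ∩ E ⊆ ⋃ s ∈ Scover, Metric.closedBall s r := by
    intro y hy
    have hyIcc : y ∈ Icc (x - R) (x + R) := by
      rw [← Real.closedBall_eq_Icc]; exact hy.1
    set i : ℕ := ⌊(y - (x - R)) / (2 * r)⌋₊ with hi
    have h2r : (0:ℝ) < 2 * r := by linarith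
    have h0 : (0:ℝ) ≤ (y - (x - R)) / (2 * r) := div_nonneg (by linarith [hyIcc.1]) h2r.le
    have hfl : 2 * r * i ≤ y - (x - R) := by
      have := Nat.floor_le h0
      calc 2 * r * i ≤ 2 * r * ((y - (x - R)) / (2 * r)) := by gcongr
      _ = y - (x - R) := by field_simp
    have hfl2 : y - (x - R) < 2 * r * (i + 1) := by
      have h := Nat.lt_floor_add_one ((y - (x - R)) / (2 * r))
      have h2 : ((y - (x - R)) / (2 * r)) < (i : ℝ) + 1 := h
      have h3 : y - (x - R) = 2 * r * ((y - (x - R)) / (2 * r)) := by field_simp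
      nlinarith
    have hin : i < n := by
      rw [hn]
      have : (y - (x - R)) / (2 * r) ≤ R / r := by
        rw [div_le_div_iff₀ h2r hr]
        nlinarith [hyIcc.2]
      exact Nat.lt_succ_of_le (Nat.floor_le_floor this)
    have hycell : y ∈ cell i := by
      rw [hcell]
      constructor
      · rw [hl]; simp only; linarith
      · rw [hlstep, hl]; simp only; linarith
    have hiRel : i ∈ Relevant := by
      rw [hRel, Finset.mem_filter]
      exact ⟨Finset.mem_range.2 hin, ⟨y, hycell, hy.2⟩⟩
    refine mem_iUnion₂.2 ⟨l i + r, Finset.mem_image_of_mem _ hiRel, ?_⟩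
    rw [Metric.mem_closedBall, Real.dist_eq, abs_le]
    have hc1 : l i ≤ y := hycell.1
    have hc2 : y < l i + 2 * r := by rw [← hlstep]; exact hycell.2
    constructor <;> [linarith; linarith]
  have hcovnum : coverNum r (Metric.closedBall x R ∩ E) ≤ Relevant.card :=
    le_trans (aux_covnum_le Scover hcovS) Finset.card_image_le
  -- classify the cells
  set Sbig : ℕ → ENNReal := fun i =>
    ∑' j, if r ≤ a j then MeasureTheory.volume (U j ∩ cell i) else 0 with hSbig
  set Ssmall : ℕ → ENNReal := fun i =>
    ∑' j, if r ≤ a j then 0 else MeasureTheory.volume (U j ∩ cell i) with hSsmall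
  have hdich : ∀ i ∈ Relevant, cell i ⊆ Icc 0 L →
      ENNReal.ofReal r ≤ Sbig i ∨ ENNReal.ofReal r ≤ Ssmall i := by
    intro i hiR hsubL
    by_contra hcon
    push_neg at hcon
    obtain ⟨h1, h2⟩ := hcon
    have hsplit : cell i ⊆ (cell i ∩ E) ∪ ⋃ j, U j ∩ cell i := by
      intro z hz
      by_cases hzU : z ∈ ⋃ j, U j
      · obtain ⟨j, hj⟩ := mem_iUnion.1 hzU
        exact Or.inr (mem_iUnion.2 ⟨j, hj, hz⟩)
      · exact Or.inl ⟨hz, by rw [hEeq]; exact ⟨hsubL hz, hzU⟩⟩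
    have hE0 : MeasureTheory.volume (cell i ∩ E) = 0 :=
      le_antisymm (le_trans (MeasureTheory.measure_mono inter_subset_right) hμE.le)
        (by simp)
    have hle : ENNReal.ofReal (2 * r) ≤ Sbig i + Ssmall i := by
      calc ENNReal.ofReal (2 * r) = MeasureTheory.volume (cell i) := (hμcell i).symm
      _ ≤ MeasureTheory.volume ((cell i ∩ E) ∪ ⋃ j, U j ∩ cell i) :=
          MeasureTheory.measure_mono hsplit
      _ ≤ MeasureTheory.volume (cell i ∩ E) +
          MeasureTheory.volume (⋃ j, U j ∩ cell i) := MeasureTheory.measure_union_le _ _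
      _ ≤ 0 + ∑' j, MeasureTheory.volume (U j ∩ cell i) := by
          rw [hE0]
          exact add_le_add le_rfl (MeasureTheory.measure_iUnion_le _)
      _ = Sbig i + Ssmall i := by
          rw [zero_add, hSbig, hSsmall, ← ENNReal.tsum_add]
          exact tsum_congr fun j => by by_cases h : r ≤ a j <;> simp [h]
    have hlt : Sbig i + Ssmall i < ENNReal.ofReal r + ENNReal.ofReal r :=
      ENNReal.add_lt_add h1 h2
    rw [← ENNReal.ofReal_add hr.le hr.le] at hlt
    have := lt_of_le_of_lt hle hlt
    rw [ENNReal.ofReal_lt_ofReal_iff (by linarith)] at this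
    linarith
  set edgeC : Finset ℕ := Relevant.filter (fun i => ¬ (cell i ⊆ Icc 0 L)) with hedgeC
  set bigC : Finset ℕ := Relevant.filter
    (fun i => (cell i ⊆ Icc 0 L) ∧ ENNReal.ofReal r ≤ Sbig i) with hbigC
  set smallC : Finset ℕ := Relevant.filter
    (fun i => (cell i ⊆ Icc 0 L) ∧ ¬ ENNReal.ofReal r ≤ Sbig i) with hsmallC
  have hsplitR : Relevant ⊆ edgeC ∪ bigC ∪ smallC := by
    intro i hi
    by_cases h1 : cell i ⊆ Icc 0 L
    · by_cases h2 : ENNReal.ofReal r ≤ Sbig i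
      · exact Finset.mem_union.2 (Or.inl (Finset.mem_union.2 (Or.inr
          (Finset.mem_filter.2 ⟨hi, h1, h2⟩))))
      · exact Finset.mem_union.2 (Or.inr (Finset.mem_filter.2 ⟨hi, h1, h2⟩))
    · exact Finset.mem_union.2 (Or.inl (Finset.mem_union.2 (Or.inl
        (Finset.mem_filter.2 ⟨hi, h1⟩))))
  have hcardsplit : Relevant.card ≤ edgeC.card + bigC.card + smallC.card := by
    calc Relevant.card ≤ (edgeC ∪ bigC ∪ smallC).card := Finset.card_le_card hsplitR
    _ ≤ (edgeC ∪ bigC).card + smallC.card := Finset.card_union_le _ _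
    _ ≤ edgeC.card + bigC.card + smallC.card := by
        have := Finset.card_union_le edgeC bigC
        omega
  -- edge cells: at most 2
  have hE_Icc : E ⊆ Icc 0 L := by rw [hEeq]; exact diff_subset
  have hcard_pt : ∀ z : ℝ, ((Finset.range n).filter (fun i => z ∈ cell i)).card ≤ 1 := by
    intro z
    rw [Finset.card_le_one]
    intro i hi j hj
    rw [Finset.mem_filter] at hi hj
    by_contra hij
    exact Set.disjoint_left.1 (hcelldisj i j hij) hi.2 hj.2
  have hedge2 : edgeC.card ≤ 2 := by
    have hsub : edgeC ⊆ (Finset.range n).filter (fun i => (0:ℝ) ∈ cell i) ∪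
        (Finset.range n).filter (fun i => L ∈ cell i) := by
      intro i hi
      rw [hedgeC, Finset.mem_filter, hRel, Finset.mem_filter] at hi
      obtain ⟨⟨hin, e, hecell, heE⟩, hnsub⟩ := hi
      obtain ⟨w, hwcell, hwout⟩ := not_subset.1 hnsub
      have heL : e ∈ Icc 0 L := hE_Icc heE
      rw [Set.mem_Icc, not_and_or, not_le, not_le] at hwout
      rcases hwout with hw0 | hwL
      · refine Finset.mem_union.2 (Or.inl (Finset.mem_filter.2 ⟨hin, ?_⟩))
        exact ⟨le_trans hwcell.1 (by linarith), lt_of_le_of_lt heL.1 hecell.2⟩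
      · refine Finset.mem_union.2 (Or.inr (Finset.mem_filter.2 ⟨hin, ?_⟩))
        exact ⟨le_trans hecell.1 heL.2, lt_of_le_of_lt hwL.le hwcell.2⟩
    calc edgeC.card ≤ _ := Finset.card_le_card hsub
    _ ≤ _ := Finset.card_union_le _ _
    _ ≤ 2 := by
        have h1 := hcard_pt 0
        have h2 := hcard_pt L
        omega
  -- big cells
  set Wide : Set ℝ := Icc (x - 3 * R) (x + 3 * R) with hWide
  have hbigfin : {j | r ≤ a j}.Finite := by
    have h0 : Filter.Tendsto a Filter.atTop (nhds 0) := hsum.tendsto_atTop_zero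
    have hev := h0.eventually_lt_const hr
    obtain ⟨N, hN⟩ := Filter.eventually_atTop.1 hev
    apply Set.Finite.subset (Set.finite_Iio N)
    intro j hj
    by_contra hcon
    simp only [Set.mem_Iio, not_lt] at hcon
    exact absurd (hN j hcon) (not_lt.2 hj)
  set JW : Finset ℕ := hbigfin.toFinset.filter (fun j => (U j ∩ Wide).Nonempty) with hJW
  set Jin : Finset ℕ := JW.filter (fun j => U j ⊆ Wide) with hJinDef
  set Epts : Finset ℝ := JW.image P ∪ JW.image Q with hEpts
  have hbig_endpoint : ∀ i ∈ bigC, ∃ e, e ∈ cell i ∧ e ∈ Epts := by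
    intro i hi
    rw [hbigC, Finset.mem_filter] at hi
    obtain ⟨hiR, hsubL, hSbigge⟩ := hi
    have hiRel := hiR
    rw [hRel, Finset.mem_filter] at hiRel
    obtain ⟨hin, e, hecell, heE⟩ := hiRel
    have hin' : i < n := Finset.mem_range.1 hin
    have hexj : ∃ j, (r ≤ a j) ∧ MeasureTheory.volume (U j ∩ cell i) ≠ 0 := by
      by_contra hcon
      push_neg at hcon
      have hz : Sbig i = 0 := by
        rw [hSbig]
        rw [ENNReal.tsum_eq_zero]
        intro j
        by_cases h : r ≤ a j
        · simp only [h, if_true]; exact hcon j h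
        · simp [h]
      rw [hz, le_zero_iff, ENNReal.ofReal_eq_zero] at hSbigge
      linarith
    obtain ⟨j, hjr, hjvol⟩ := hexj
    have hjne : (U j ∩ cell i).Nonempty := by
      rw [nonempty_iff_ne_empty]
      intro h
      exact hjvol (by rw [h, MeasureTheory.measure_empty])
    obtain ⟨w, hwU, hwcell⟩ := hjne
    have hjJW : j ∈ JW := by
      rw [hJW, Finset.mem_filter]
      exact ⟨hbigfin.mem_toFinset.2 hjr, ⟨w, hwU, hcellWide i hin' hwcell⟩⟩
    have heU : e ∉ U j := by
      rw [hEeq] at heE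
      exact fun h => heE.2 (mem_iUnion.2 ⟨j, h⟩)
    rw [hUeq] at hwU heU
    rw [Set.mem_Ioo, not_and_or, not_lt, not_lt] at heU
    rcases heU with heP | heQ
    · refine ⟨P j, ⟨le_trans hecell.1 heP, lt_trans hwU.1 hwcell.2⟩, ?_⟩
      exact Finset.mem_union.2 (Or.inl (Finset.mem_image_of_mem _ hjJW))
    · refine ⟨Q j, ⟨le_trans hwcell.1 hwU.2.le, lt_of_le_of_lt heQ hecell.2⟩, ?_⟩
      exact Finset.mem_union.2 (Or.inr (Finset.mem_image_of_mem _ hjJW))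
  set f : ℕ → ℝ := fun i =>
    if h : ∃ e, e ∈ cell i ∧ e ∈ Epts then h.choose else 0 with hf
  have hfspec : ∀ i ∈ bigC, f i ∈ cell i ∧ f i ∈ Epts := by
    intro i hi
    have h := hbig_endpoint i hi
    rw [hf]
    simp only [dif_pos h]
    exact h.choose_spec
  have hbigcard : bigC.card ≤ Epts.card := by
    apply Finset.card_le_card_of_injOn f
    · intro i hi; exact (hfspec i hi).2
    · intro i hi i' hi' hff
      simp only [Finset.mem_coe] at hi hi'
      by_contra hne
      have h1 := (hfspec i hi).1
      have h2 := (hfspec i' hi').1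
      rw [hff] at h1
      exact Set.disjoint_left.1 (hcelldisj i i' hne) h1 h2
  have hEptscard : Epts.card ≤ 2 * JW.card := by
    calc Epts.card ≤ (JW.image P).card + (JW.image Q).card := Finset.card_union_le _ _
    _ ≤ JW.card + JW.card := add_le_add Finset.card_image_le Finset.card_image_le
    _ = 2 * JW.card := by ring
  have hUcard_pt : ∀ z : ℝ, (JW.filter (fun j => z ∈ U j)).card ≤ 1 := by
    intro z
    rw [Finset.card_le_one]
    intro i hi j hj
    rw [Finset.mem_filter] at hi hj
    by_contra hij
    exact Set.disjoint_left.1 (hdisj hij) hi.2 hj.2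
  have hJWsplit : JW.card ≤ Jin.card + 2 := by
    have hJinsub : Jin ⊆ JW := Finset.filter_subset _ _
    have hsdiff : JW \ Jin ⊆ JW.filter (fun j => (x - 3 * R) ∈ U j) ∪
        JW.filter (fun j => (x + 3 * R) ∈ U j) := by
      intro j hj
      rw [Finset.mem_sdiff] at hj
      obtain ⟨hjJW, hjnotin⟩ := hj
      have hjJW' := hjJW
      rw [hJW, Finset.mem_filter] at hjJW'
      obtain ⟨_, w, hwU, hwW⟩ := hjJW'
      have hnsub : ¬ U j ⊆ Wide := by
        intro h
        exact hjnotin (Finset.mem_filter.2 ⟨hjJW, h⟩)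
      obtain ⟨w', hw'U, hw'out⟩ := not_subset.1 hnsub
      rw [hUeq] at hwU hw'U
      rw [hWide, Set.mem_Icc, not_and_or, not_le, not_le] at hw'out
      rw [hWide, Set.mem_Icc] at hwW
      rcases hw'out with h | h
      · refine Finset.mem_union.2 (Or.inl (Finset.mem_filter.2 ⟨hjJW, ?_⟩))
        rw [hUeq, Set.mem_Ioo]
        exact ⟨lt_of_lt_of_le hw'U.1 (by linarith [hwW.1]) |>.trans_le (le_refl _) |>.trans_le (le_refl _), lt_of_le_of_lt hwW.1 hwU.2 |>.trans_le (le_refl _)⟩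
      · refine Finset.mem_union.2 (Or.inr (Finset.mem_filter.2 ⟨hjJW, ?_⟩))
        rw [hUeq, Set.mem_Ioo]
        exact ⟨lt_of_lt_of_le hwU.1 hwW.2, lt_trans h hw'U.2⟩
    have h1 : (JW \ Jin).card ≤ 2 := by
      calc (JW \ Jin).card ≤ _ := Finset.card_le_card hsdiff
      _ ≤ _ := Finset.card_union_le _ _
      _ ≤ 2 := by
          have ha := hUcard_pt (x - 3 * R)
          have hb := hUcard_pt (x + 3 * R)
          omega
    have h2 := Finset.card_sdiff_add_card_eq_card hJinsub
    omega
  have hJinr : ∀ j ∈ Jin, r ≤ a j := by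
    intro j hj
    rw [hJinDef, Finset.mem_filter, hJW, Finset.mem_filter] at hj
    exact hbigfin.mem_toFinset.1 hj.1.1
  have hJinsum : ∑ j ∈ Jin, a j ≤ 6 * R := by
    have hdisjJin : (↑Jin : Set ℕ).PairwiseDisjoint U := fun i _ j _ hij => hdisj hij
    have h1 : ENNReal.ofReal (∑ j ∈ Jin, a j) =
        MeasureTheory.volume (⋃ j ∈ Jin, U j) := by
      rw [MeasureTheory.measure_biUnion_finset hdisjJin (fun j _ => hUmeas j)]
      rw [ENNReal.ofReal_sum_of_nonneg (fun j _ => (hpos j).le)]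
      exact Finset.sum_congr rfl fun j _ => (hμU j).symm
    have h2 : MeasureTheory.volume (⋃ j ∈ Jin, U j) ≤ ENNReal.ofReal (6 * R) := by
      have hsub : (⋃ j ∈ Jin, U j) ⊆ Wide := by
        apply iUnion₂_subset
        intro j hj
        rw [hJinDef, Finset.mem_filter] at hj
        exact hj.2
      calc MeasureTheory.volume (⋃ j ∈ Jin, U j) ≤ MeasureTheory.volume Wide :=
            MeasureTheory.measure_mono hsub
      _ = ENNReal.ofReal (6 * R) := by
          rw [hWide, Real.volume_Icc]
          congr 1
          ring
    have := le_trans h1.le h2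
    rwa [ENNReal.ofReal_le_ofReal_iff (by positivity)] at this
  have hJincount : (Jin.card : ℝ) ≤ c * (24:ℝ) ^ α * (R / r) ^ α :=
    aux_big_count hpos hdec hsum hc hα hD' hr hrR (by linarith) Jin hJinr hJinsum
  have hbigreal : (bigC.card : ℝ) ≤ 2 * (c * (24:ℝ) ^ α * (R / r) ^ α) + 4 := by
    have h1 : (bigC.card : ℝ) ≤ 2 * (JW.card : ℝ) := by
      have := hbigcard.trans hEptscard
      exact_mod_cast this
    have h2 : (JW.card : ℝ) ≤ (Jin.card : ℝ) + 2 := by exact_mod_cast hJWsplit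
    linarith
  -- small cells
  have hsmallkey : ∀ i ∈ smallC, ENNReal.ofReal r ≤ Ssmall i := by
    intro i hi
    rw [hsmallC, Finset.mem_filter] at hi
    exact (hdich i hi.1 hi.2.1).resolve_left hi.2.2
  have hsum1 : (smallC.card : ENNReal) * ENNReal.ofReal r ≤ ∑ i ∈ smallC, Ssmall i := by
    have := Finset.card_nsmul_le_sum smallC Ssmall (ENNReal.ofReal r) hsmallkey
    rwa [nsmul_eq_mul] at this
  have hswap : ∑ i ∈ smallC, Ssmall i =
      ∑' j, ∑ i ∈ smallC, (if r ≤ a j then 0 else MeasureTheory.volume (U j ∩ cell i)) := by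
    rw [hSsmall]
    exact (Summable.tsum_finsetSum (fun i _ => ENNReal.summable)).symm
  set Gsum : ENNReal :=
    ∑' j, if r ≤ a j then 0 else MeasureTheory.volume (U j ∩ Wide) with hGsum
  have hinner : ∀ j, ∑ i ∈ smallC, (if r ≤ a j then 0 else
      MeasureTheory.volume (U j ∩ cell i)) ≤
      (if r ≤ a j then 0 else MeasureTheory.volume (U j ∩ Wide)) := by
    intro j
    by_cases h : r ≤ a j
    · simp [h]
    · simp only [h, if_false]
      have hdisjcells : (↑smallC : Set ℕ).PairwiseDisjoint (fun i => U j ∩ cell i) := by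
        intro i _ i' _ hii
        exact Disjoint.mono inter_subset_right inter_subset_right (hcelldisj i i' hii)
      rw [← MeasureTheory.measure_biUnion_finset hdisjcells
        (fun i _ => (hUmeas j).inter (hcellmeas i))]
      apply MeasureTheory.measure_mono
      apply iUnion₂_subset
      intro i hi
      have hiRel : i ∈ Relevant := Finset.mem_of_subset (Finset.filter_subset _ _) hi
      rw [hRel, Finset.mem_filter] at hiRel
      have hin' : i < n := Finset.mem_range.1 hiRel.1
      exact inter_subset_inter le_rfl (hcellWide i hin')
  have hsmalltot : (smallC.card : ENNReal) * ENNReal.ofReal r ≤ Gsum := by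
    calc (smallC.card : ENNReal) * ENNReal.ofReal r ≤ ∑ i ∈ smallC, Ssmall i := hsum1
    _ = _ := hswap
    _ ≤ Gsum := ENNReal.tsum_le_tsum hinner
  -- bound Gsum two ways
  have hex0 : ∃ j, a j < r := by
    have := hbigfin.infinite_compl.nonempty
    obtain ⟨j, hj⟩ := this
    exact ⟨j, not_le.1 hj⟩
  set n₀ : ℕ := Nat.find hex0 with hn₀def
  have hn₀ : a n₀ < r := Nat.find_spec hex0
  have hmin : ∀ j, a j < r → n₀ ≤ j := fun j h => Nat.find_min' hex0 h
  have hGsumA : Gsum ≤ ENNReal.ofReal (auxT a n₀) := by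
    have hpt : ∀ j, (if r ≤ a j then 0 else MeasureTheory.volume (U j ∩ Wide)) ≤
        (if n₀ ≤ j then ENNReal.ofReal (a j) else 0) := by
      intro j
      by_cases h : r ≤ a j
      · simp [h]
      · have hj : n₀ ≤ j := hmin j (not_le.1 h)
        simp only [h, if_false, hj, if_true]
        calc MeasureTheory.volume (U j ∩ Wide) ≤ MeasureTheory.volume (U j) :=
              MeasureTheory.measure_mono inter_subset_left
        _ = ENNReal.ofReal (a j) := hμU j
    calc Gsum ≤ ∑' j, (if n₀ ≤ j then ENNReal.ofReal (a j) else 0) :=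
          ENNReal.tsum_le_tsum hpt
    _ ≤ ENNReal.ofReal (auxT a n₀) := by
        rw [ENNReal.tsum_eq_iSup_sum]
        apply iSup_le
        intro s
        have h1 : ∑ j ∈ s, (if n₀ ≤ j then ENNReal.ofReal (a j) else 0) =
            ∑ j ∈ s.filter (fun j => n₀ ≤ j), ENNReal.ofReal (a j) :=
          (Finset.sum_filter _ _).symm
        rw [h1, ← ENNReal.ofReal_sum_of_nonneg (fun j _ => (hpos j).le)]
        apply ENNReal.ofReal_le_ofReal
        apply aux_tail_sum hpos hsum
        intro j hj
        exact (Finset.mem_filter.1 hj).2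
  have hGsumB : Gsum ≤ ENNReal.ofReal (6 * R) := by
    set V : ℕ → Set ℝ := fun j => if r ≤ a j then ∅ else U j ∩ Wide with hV
    have h1 : Gsum = ∑' j, MeasureTheory.volume (V j) := by
      apply tsum_congr
      intro j
      rw [hV]
      by_cases h : r ≤ a j <;> simp [h]
    have hVdisj : Pairwise (Function.onFun Disjoint V) := by
      intro i j hij
      have := hdisj hij
      rw [Function.onFun, hV]
      apply Disjoint.mono _ _ this
      · by_cases h : r ≤ a i <;> simp [h]
      · by_cases h : r ≤ a j <;> simp [h]
    have hVmeas : ∀ j, MeasurableSet (V j) := by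
      intro j
      rw [hV]
      by_cases h : r ≤ a j <;> simp [h]
      exact (hUmeas j).inter measurableSet_Icc
    rw [h1, ← MeasureTheory.measure_iUnion hVdisj hVmeas]
    have hVsub : (⋃ j, V j) ⊆ Wide := by
      apply iUnion_subset
      intro j
      rw [hV]
      by_cases h : r ≤ a j <;> simp [h]
    calc MeasureTheory.volume (⋃ j, V j) ≤ MeasureTheory.volume Wide :=
          MeasureTheory.measure_mono hVsub
    _ = ENNReal.ofReal (6 * R) := by rw [hWide, Real.volume_Icc]; congr 1; ring
  -- convert to the reals
  have hminnn : 0 ≤ min (auxT a n₀) (6 * R) :=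
    le_min (aux_T_nonneg (fun k => (hpos k).le) n₀) (by positivity)
  have hcr : (smallC.card : ℝ) * r ≤ min (auxT a n₀) (6 * R) := by
    have h1 : (smallC.card : ENNReal) * ENNReal.ofReal r ≤
        ENNReal.ofReal (min (auxT a n₀) (6 * R)) := by
      rcases le_total (auxT a n₀) (6 * R) with h | h
      · rw [min_eq_left h]; exact hsmalltot.trans hGsumA
      · rw [min_eq_right h]; exact hsmalltot.trans hGsumB
    rw [← ENNReal.ofReal_natCast, ← ENNReal.ofReal_mul (by positivity)] at h1
    rwa [ENNReal.ofReal_le_ofReal_iff hminnn] at h1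
  have hsmallreal : (smallC.card : ℝ) ≤ 4 * c * (8:ℝ) ^ α * (R / r) ^ α + 1 := by
    have hsm := aux_small_mass hpos hdec hsum hc hα hD' hr hrR hRρ
      (by positivity : (0:ℝ) ≤ (smallC.card : ℝ) * r) hn₀
      (le_trans hcr (min_le_left _ _)) (le_trans hcr (min_le_right _ _))
    have h2 : (smallC.card : ℝ) * r ≤ (4 * c * (8:ℝ) ^ α * (R / r) ^ α + 1) * r := by
      calc (smallC.card : ℝ) * r ≤ r * (4 * c * (8:ℝ) ^ α * (R / r) ^ α + 1) := hsm
      _ = (4 * c * (8:ℝ) ^ α * (R / r) ^ α + 1) * r := by ring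
    exact le_of_mul_le_mul_right h2 hr
  -- put everything together
  have h8le24 : (8:ℝ) ^ α ≤ (24:ℝ) ^ α :=
    Real.rpow_le_rpow (by norm_num) (by norm_num) hα
  have h8pos : (0:ℝ) < (8:ℝ) ^ α := Real.rpow_pos_of_pos (by norm_num) _
  have hfinal : (Relevant.card : ℝ) ≤ (7 + 6 * c * (24:ℝ) ^ α) * (R / r) ^ α := by
    have h1 : (Relevant.card : ℝ) ≤ (edgeC.card : ℝ) + (bigC.card : ℝ) + (smallC.card : ℝ) := by
      exact_mod_cast hcardsplit
    have h2 : (edgeC.card : ℝ) ≤ 2 := by exact_mod_cast hedge2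
    have h24pos : (0:ℝ) < (24:ℝ) ^ α := Real.rpow_pos_of_pos (by norm_num) _
    nlinarith [hbigreal, hsmallreal, hQ1, hQpos, hc]
  calc (coverNum r (Metric.closedBall x R ∩ E) : ℝ) ≤ (Relevant.card : ℝ) := by
        exact_mod_cast hcovnum
  _ ≤ _ := hfinal

lemma aux_dimA_eq (F : Set ℝ) : dimA F =
    sInf {α : ℝ | ∃ c > (0 : ℝ), ∃ ρ > (0 : ℝ), ∀ x ∈ F, ∀ r R : ℝ,
      0 < r → r < R → R < ρ →
      (coverNum r (Metric.closedBall x R ∩ F) : ℝ) ≤ c * (R / r) ^ α} := rfl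

/-- if `dim_A D_a = 0` then every complementary set of `a` has
Assouad dimension `0`. -/
theorem dimA_eq_zero_of_dimA_decSet_eq_zero
    (a : ℕ → ℝ) (hpos : ∀ n, 0 < a n) (hdec : Antitone a) (hsum : Summable a)
    (hD : dimA (decSet a) = 0)
    (E : Set ℝ) (hE : IsComplementarySet a E) :
    dimA E = 0 := by
  classical
  obtain ⟨U, hIoo, hUsub, hdisj, hEeq⟩ := hE
  choose P Q hPQ hlen hUeq using hIoo
  have hLnn : (0:ℝ) ≤ ∑' i, a i := tsum_nonneg (fun i => (hpos i).le)
  have h0E : (0:ℝ) ∈ E := by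
    rw [hEeq]
    refine ⟨⟨le_refl 0, hLnn⟩, ?_⟩
    intro hmem
    rw [mem_iUnion] at hmem
    obtain ⟨m, hm⟩ := hmem
    rw [hUeq] at hm
    have hP : P m < 0 := hm.1
    have hz : P m / 2 ∈ U m := by
      rw [hUeq]; exact ⟨by linarith, by linarith [hm.2]⟩
    have h1 := (hUsub m hz).1
    linarith
  have h0D : (0:ℝ) ∈ decSet a := Or.inl rfl
  rw [aux_dimA_eq] at hD ⊢
  refine le_antisymm ?_ (le_csInf ⟨1, aux_one_mem E⟩
    (fun β hβ => aux_mem_nonneg h0E hβ))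
  apply le_of_forall_pos_le_add
  intro ε hε
  rw [zero_add]
  have hlt : sInf {α : ℝ | ∃ c > (0 : ℝ), ∃ ρ > (0 : ℝ), ∀ x ∈ decSet a, ∀ r R : ℝ,
      0 < r → r < R → R < ρ →
      (coverNum r (Metric.closedBall x R ∩ decSet a) : ℝ) ≤ c * (R / r) ^ α} < ε := by
    rw [hD]; exact hε
  obtain ⟨α, hαSD, hαε⟩ := exists_lt_of_csInf_lt ⟨1, aux_one_mem (decSet a)⟩ hlt
  have hα0 : 0 ≤ α := aux_mem_nonneg h0D hαSD
  obtain ⟨c, hc, ρ, hρ, hbound⟩ := hαSD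
  have h24pos : (0:ℝ) < (24:ℝ) ^ α := Real.rpow_pos_of_pos (by norm_num) _
  have hαSE : α ∈ {α : ℝ | ∃ c > (0 : ℝ), ∃ ρ > (0 : ℝ), ∀ x ∈ E, ∀ r R : ℝ,
      0 < r → r < R → R < ρ →
      (coverNum r (Metric.closedBall x R ∩ E) : ℝ) ≤ c * (R / r) ^ α} := by
    refine ⟨7 + 6 * c * (24:ℝ) ^ α, by nlinarith, ρ / 8, by positivity, ?_⟩
    intro x hx r R hr hrR hRρ
    exact aux_core hpos hdec hsum hc hα0 hbound hPQ hlen hUeq hUsub hdisj hEeq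
      hx hr hrR (by linarith)
  calc sInf {α : ℝ | ∃ c > (0 : ℝ), ∃ ρ > (0 : ℝ), ∀ x ∈ E, ∀ r R : ℝ,
      0 < r → r < R → R < ρ →
      (coverNum r (Metric.closedBall x R ∩ E) : ℝ) ≤ c * (R / r) ^ α} ≤ α :=
        csInf_le ⟨0, fun β hβ => aux_mem_nonneg h0E hβ⟩ hαSE
  _ ≤ ε := hαε.le
end

section
/- Suppose {a_j} is a positive, decreasing sequence with the property that there are positive constants c_1, c_2 and λ < 1 such that c_1 λ^j ≤ a_j ≤ c_2 λ^j for all j. Then every E ∈ 𝒞_a satisfies dim_A E = 0. -/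
open scoped BigOperators
open Set

section helpers
lemma coverNum_le_of_cover {r : ℝ} {F : Set ℝ} {T : Finset ℝ}
    (h : F ⊆ ⋃ x ∈ T, Metric.closedBall x r) : coverNum r F ≤ T.card :=
  Nat.sInf_le ⟨T, rfl, h⟩

lemma exists_cover_Icc (u v r : ℝ) (hr : 0 < r) :
    ∃ T : Finset ℝ, Set.Icc u v ⊆ ⋃ x ∈ T, Metric.closedBall x r := by
  refine ⟨(Finset.range (⌊(v - u) / (2 * r)⌋₊ + 1)).image (fun i : ℕ => u + r + 2 * r * i), ?_⟩
  intro y hy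
  have h2r : 0 < 2 * r := by linarith
  set i := ⌊(y - u) / (2 * r)⌋₊ with hi
  have hyu : 0 ≤ (y - u) / (2 * r) := by
    apply div_nonneg (by linarith [hy.1]) h2r.le
  have h1 : (i : ℝ) * (2 * r) ≤ y - u := (le_div_iff₀ h2r).mp (Nat.floor_le hyu)
  have h2 : y - u < ((i : ℝ) + 1) * (2 * r) := by
    have := Nat.lt_floor_add_one ((y - u) / (2 * r))
    calc y - u = (y - u) / (2 * r) * (2 * r) := by field_simp
    _ < ((i:ℝ) + 1) * (2 * r) := by
        apply mul_lt_mul_of_pos_right _ h2r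
        exact_mod_cast this
  have hmem : i ∈ Finset.range (⌊(v - u) / (2 * r)⌋₊ + 1) := by
    rw [Finset.mem_range, Nat.lt_succ_iff]
    apply Nat.floor_le_floor
    gcongr
    exact hy.2
  refine Set.mem_iUnion₂.mpr ⟨u + r + 2 * r * i, Finset.mem_image_of_mem _ hmem, ?_⟩
  rw [Metric.mem_closedBall, Real.dist_eq, abs_le]
  constructor <;> nlinarith

lemma one_le_coverNum {r : ℝ} {F : Set ℝ} (hne : F.Nonempty)
    (hcov : ∃ T : Finset ℝ, F ⊆ ⋃ x ∈ T, Metric.closedBall x r) :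
    1 ≤ coverNum r F := by
  rw [Nat.one_le_iff_ne_zero]
  intro h0
  rw [coverNum, Nat.sInf_eq_zero] at h0
  rcases h0 with h | h
  · obtain ⟨T, hT0, hTcov⟩ := h
    obtain ⟨y, hy⟩ := hne
    have := hTcov hy
    rw [Finset.card_eq_zero] at hT0
    simp [hT0] at this
  · obtain ⟨T, hT⟩ := hcov
    have : T.card ∈ {n : ℕ | ∃ S : Finset ℝ, S.card = n ∧ F ⊆ ⋃ x ∈ S, Metric.closedBall x r} := ⟨T, rfl, hT⟩
    rw [h] at this
    exact this

lemma card_le_of_bounds (S : Finset ℕ) (A B : ℝ) (hAB : A ≤ B)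
    (h : ∀ n ∈ S, A ≤ (n:ℝ) ∧ (n:ℝ) ≤ B) : (S.card : ℝ) ≤ B - A + 1 := by
  rcases S.eq_empty_or_nonempty with rfl | ⟨n0, hn0⟩
  · simp; linarith
  have hB0 : 0 ≤ B := le_trans (Nat.cast_nonneg n0) (h n0 hn0).2
  have hsub : S ⊆ Finset.Icc ⌈A⌉₊ ⌊B⌋₊ := by
    intro n hn
    rw [Finset.mem_Icc]
    exact ⟨Nat.ceil_le.mpr (h n hn).1, Nat.le_floor (h n hn).2⟩
  have h1 : S.card ≤ ⌊B⌋₊ + 1 - ⌈A⌉₊ := by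
    simpa [Nat.card_Icc] using Finset.card_le_card hsub
  have h2 : ((⌊B⌋₊ + 1 - ⌈A⌉₊ : ℕ) : ℝ) ≤ B - A + 1 := by
    by_cases hc : ⌈A⌉₊ ≤ ⌊B⌋₊ + 1
    · rw [Nat.cast_sub hc]
      push_cast
      have := Nat.le_ceil A
      have := Nat.floor_le hB0
      linarith
    · rw [Nat.sub_eq_zero_of_le (le_of_not_ge hc)]
      push_cast
      linarith
  exact le_trans (by exact_mod_cast h1) h2

lemma log_le_rpow_div {t α : ℝ} (ht : 1 ≤ t) (hα : 0 < α) :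
    Real.log t ≤ t ^ α / α := by
  have ht0 : 0 < t := lt_of_lt_of_le one_pos ht
  have h1 : Real.log (t ^ α) ≤ t ^ α - 1 := Real.log_le_sub_one_of_pos (Real.rpow_pos_of_pos ht0 _)
  rw [Real.log_rpow ht0] at h1
  rw [le_div_iff₀ hα]
  nlinarith [Real.rpow_pos_of_pos ht0 α]
end helpers

set_option maxHeartbeats 1600000 in
/-- if `c₁ λ^j ≤ a_j ≤ c₂ λ^j` (1-indexed) for positive
constants `c₁, c₂, λ` with `λ < 1`, then every complementary set of `a` has
Assouad dimension `0`. -/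
theorem dimA_eq_zero_of_geometric_bounds
    (a : ℕ → ℝ) (hpos : ∀ n, 0 < a n) (hdec : Antitone a)
    (c₁ c₂ lam : ℝ) (hc₁ : 0 < c₁) (hc₂ : 0 < c₂) (hlam0 : 0 < lam) (hlam : lam < 1)
    (hbound : ∀ j : ℕ, c₁ * lam ^ (j + 1) ≤ a j ∧ a j ≤ c₂ * lam ^ (j + 1))
    (E : Set ℝ) (hE : IsComplementarySet a E) :
    dimA E = 0 := by
  classical
  obtain ⟨U, hU, hUsub, hUdisj, hEdef⟩ := hE
  choose p q hpq hlen hUeq using hU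
  set L : ℝ := ∑' i, a i with hLdef
  have hsum : Summable a := by
    have hgeo : Summable (fun n : ℕ => c₂ * lam ^ (n + 1)) := by
      have := (summable_geometric_of_lt_one hlam0.le hlam).mul_left (c₂ * lam)
      refine this.congr fun n => ?_
      ring
    exact Summable.of_nonneg_of_le (fun n => (hpos n).le) (fun n => (hbound n).2) hgeo
  have hL0 : 0 ≤ L := tsum_nonneg fun n => (hpos n).le
  have h1lam : 0 < 1 - lam := by linarith
  have htail : ∀ m : ℕ, (∑' i, a (i + m)) ≤ c₂ * lam ^ (m + 1) / (1 - lam) := by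
    intro m
    have hs1 : Summable fun i : ℕ => a (i + m) := (summable_nat_add_iff m).mpr hsum
    have hs2 : Summable fun i : ℕ => (c₂ * lam ^ (m+1)) * lam ^ i :=
      (summable_geometric_of_lt_one hlam0.le hlam).mul_left _
    have h1 : ∑' i, a (i + m) ≤ ∑' i : ℕ, (c₂ * lam ^ (m+1)) * lam ^ i := by
      refine Summable.tsum_le_tsum (fun i => ?_) hs1 hs2
      calc a (i + m) ≤ c₂ * lam ^ (i + m + 1) := (hbound _).2
        _ = (c₂ * lam ^ (m+1)) * lam ^ i := by ring
    rw [tsum_mul_left, tsum_geometric_of_lt_one hlam0.le hlam] at h1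
    rw [div_eq_mul_inv]
    exact h1
  have htail0 : ∀ m : ℕ, 0 ≤ ∑' i, a (i + m) := fun m => tsum_nonneg fun i => (hpos _).le
  -- measurability & volume facts
  have hUmeas : ∀ n, MeasurableSet (U n) := fun n => (hUeq n) ▸ measurableSet_Ioo
  have hUvol : ∀ n, MeasureTheory.volume (U n) = ENNReal.ofReal (a n) := by
    intro n; rw [hUeq n, Real.volume_Ioo, hlen n]
  have hUnionVol : MeasureTheory.volume (⋃ n, U n) = ENNReal.ofReal L := by
    rw [MeasureTheory.measure_iUnion hUdisj hUmeas]
    simp_rw [hUvol]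
    rw [← ENNReal.ofReal_tsum_of_nonneg (fun n => (hpos n).le) hsum]
  have hEvol : MeasureTheory.volume E = 0 := by
    rw [hEdef, MeasureTheory.measure_diff (Set.iUnion_subset hUsub)
      (MeasurableSet.iUnion hUmeas).nullMeasurableSet
      (by rw [hUnionVol]; exact ENNReal.ofReal_ne_top),
      Real.volume_Icc, sub_zero, hUnionVol, tsub_self]
  have hEnotU : ∀ y ∈ E, ∀ n, y ∉ U n := by
    intro y hy n hn
    rw [hEdef] at hy
    exact hy.2 (Set.mem_iUnion.mpr ⟨n, hn⟩)
  have hEIcc : E ⊆ Set.Icc 0 L := by rw [hEdef]; exact Set.diff_subset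
  -- key lemma: a big gap exists between far-apart points of E
  have key : ∀ y z : ℝ, y ∈ E → z ∈ E → y < z → ∀ m₀ : ℕ,
      (∑' i, a (i + m₀)) < z - y → ∃ n, n < m₀ ∧ U n ⊆ Set.Ioo y z := by
    intro y z hy hz hyz m₀ hlt
    by_contra hno
    push_neg at hno
    have hcases : ∀ n, (U n ∩ Set.Ioo y z).Nonempty → U n ⊆ Set.Ioo y z := by
      rintro n ⟨w, hwU, hwI⟩
      rw [hUeq n] at hwU ⊢
      intro w' hw'
      have hyn := hEnotU y hy n
      have hzn := hEnotU z hz n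
      rw [hUeq n] at hyn hzn
      constructor
      · by_contra hcon
        push_neg at hcon
        exact hyn ⟨lt_of_lt_of_le hw'.1 hcon, lt_trans hwI.1 hwU.2⟩
      · by_contra hcon
        push_neg at hcon
        exact hzn ⟨lt_trans hwU.1 hwI.2, lt_of_le_of_lt hcon hw'.2⟩
    have hsub1 : Set.Ioo y z ⊆ Set.Icc 0 L := fun w hw =>
      ⟨le_trans (hEIcc hy).1 hw.1.le, le_trans hw.2.le (hEIcc hz).2⟩
    have hdiff0 : MeasureTheory.volume (Set.Ioo y z \ ⋃ n, U n) = 0 := by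
      apply MeasureTheory.measure_mono_null _ hEvol
      rw [hEdef]
      exact Set.diff_subset_diff_left hsub1
    have step1 : ENNReal.ofReal (z - y) ≤ ∑' n, MeasureTheory.volume (Set.Ioo y z ∩ U n) := by
      have e1 : MeasureTheory.volume (Set.Ioo y z) = ENNReal.ofReal (z - y) := Real.volume_Ioo
      have e2 : Set.Ioo y z = (Set.Ioo y z ∩ ⋃ n, U n) ∪ (Set.Ioo y z \ ⋃ n, U n) :=
        (Set.inter_union_diff _ _).symm
      calc ENNReal.ofReal (z - y) = MeasureTheory.volume (Set.Ioo y z) := e1.symm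
        _ ≤ MeasureTheory.volume (Set.Ioo y z ∩ ⋃ n, U n)
            + MeasureTheory.volume (Set.Ioo y z \ ⋃ n, U n) := by
              nth_rewrite 1 [e2]; exact MeasureTheory.measure_union_le _ _
        _ = MeasureTheory.volume (⋃ n, Set.Ioo y z ∩ U n) := by
              rw [hdiff0, add_zero, Set.inter_iUnion]
        _ ≤ ∑' n, MeasureTheory.volume (Set.Ioo y z ∩ U n) := MeasureTheory.measure_iUnion_le _
    have hf : ∀ n, MeasureTheory.volume (Set.Ioo y z ∩ U n)
        ≤ ENNReal.ofReal (if n < m₀ then 0 else a n) := by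
      intro n
      by_cases hn : n < m₀
      · rw [if_pos hn]
        have hemp : Set.Ioo y z ∩ U n = ∅ := by
          by_contra hne
          rw [← Set.not_nonempty_iff_eq_empty] at hne
          push_neg at hne
          rw [Set.inter_comm] at hne
          exact hno n hn (hcases n hne)
        simp [hemp]
      · rw [if_neg hn, ← hUvol n]
        exact MeasureTheory.measure_mono Set.inter_subset_right
    have hfs : Summable (fun n => if n < m₀ then 0 else a n) :=
      Summable.of_nonneg_of_le (fun n => by split <;> simp [le_refl, (hpos n).le])
        (fun n => by split <;> simp [(hpos n).le, le_refl]) hsum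
    have step2 : (∑' n, MeasureTheory.volume (Set.Ioo y z ∩ U n))
        ≤ ENNReal.ofReal (∑' n, if n < m₀ then 0 else a n) := by
      rw [ENNReal.ofReal_tsum_of_nonneg (fun n => by split <;> simp [(hpos n).le, le_refl]) hfs]
      exact ENNReal.tsum_le_tsum hf
    have step3 : (∑' n, if n < m₀ then 0 else a n) = ∑' i, a (i + m₀) := by
      have := Summable.sum_add_tsum_nat_add (f := fun n => if n < m₀ then 0 else a n) m₀ hfs
      have hz1 : (∑ i ∈ Finset.range m₀, if i < m₀ then (0:ℝ) else a i) = 0 :=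
        Finset.sum_eq_zero fun i hi => if_pos (Finset.mem_range.mp hi)
      have hz2 : (∑' i : ℕ, if i + m₀ < m₀ then (0:ℝ) else a (i + m₀)) = ∑' i, a (i + m₀) := by
        congr 1
        funext i
        rw [if_neg (by omega)]
      rw [hz1, zero_add, hz2] at this
      exact this.symm
    have : ENNReal.ofReal (z - y) ≤ ENNReal.ofReal (∑' i, a (i + m₀)) := by
      rw [← step3]; exact step1.trans step2
    rw [ENNReal.ofReal_le_ofReal_iff (htail0 m₀)] at this
    linarith
  have hc12 : c₁ ≤ c₂ := by
    have h := hbound 0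
    have := le_trans h.1 h.2
    simpa [pow_one] using (mul_le_mul_iff_of_pos_right hlam0).mp (by simpa using this)
  have hloglam : Real.log lam < 0 := Real.log_neg hlam0 hlam
  set D : ℝ := -Real.log lam with hDdef
  have hD : 0 < D := neg_pos.mpr hloglam
  set K : ℝ := Real.log (4 * c₂ / ((1 - lam) * c₁)) with hKdef
  have hKarg : 1 < 4 * c₂ / ((1 - lam) * c₁) := by
    rw [lt_div_iff₀ (by positivity)]
    nlinarith
  have hK : 0 < K := Real.log_pos hKarg
  -- main covering estimate
  have hmem : ∀ α : ℝ, 0 < α → ∃ c > (0 : ℝ), ∃ ρ > (0 : ℝ), ∀ x ∈ E, ∀ r R : ℝ,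
      0 < r → r < R → R < ρ →
      (coverNum r (Metric.closedBall x R ∩ E) : ℝ) ≤ c * (R / r) ^ α := by
    intro α hα
    refine ⟨1 / (D * α) + K / D + 2, by positivity, 1, one_pos, ?_⟩
    intro x hx r R hr hrR hR1
    have hR0 : 0 < R := lt_trans hr hrR
    have hRr : 1 < R / r := (one_lt_div hr).mpr hrR
    have ht1 : (1:ℝ) ≤ (R / r) ^ α := by
      calc (1:ℝ) = (R/r) ^ (0:ℝ) := (Real.rpow_zero _).symm
      _ ≤ (R/r) ^ α := Real.rpow_le_rpow_of_exponent_le hRr.le hα.le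
    -- choose m₀
    have hPex : ∃ m : ℕ, c₂ * lam ^ (m + 1) / (1 - lam) ≤ r / 2 := by
      obtain ⟨n, hn⟩ := exists_pow_lt_of_lt_one
        (show (0:ℝ) < r / 2 * (1 - lam) / c₂ by positivity) hlam
      refine ⟨n, ?_⟩
      rw [div_le_iff₀ h1lam]
      have h2 : lam ^ (n+1) ≤ lam ^ n := by
        rw [pow_succ]
        nlinarith [pow_pos hlam0 n]
      rw [lt_div_iff₀ hc₂] at hn
      nlinarith [pow_pos hlam0 (n+1), pow_pos hlam0 n]
    set m₀ := Nat.find hPex with hm₀def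
    have hm₀spec : c₂ * lam ^ (m₀ + 1) / (1 - lam) ≤ r / 2 := Nat.find_spec hPex
    set Bigs : Finset ℕ := (Finset.range m₀).filter
      (fun n => U n ⊆ Set.Ioo (x - R) (x + R)) with hBigsdef
    set m := Bigs.card with hmdef
    set g : ℝ → ℕ := fun w => ((Finset.range m₀).filter
      (fun n => U n ⊆ Set.Ioo (x - R) w)).card with hgdef
    have hball : ∀ w : ℝ, w ∈ Metric.closedBall x R → x - R ≤ w ∧ w ≤ x + R := by
      intro w hw
      rw [Metric.mem_closedBall, Real.dist_eq, abs_le] at hw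
      constructor <;> linarith [hw.1, hw.2]
    have hg_le : ∀ w ∈ Metric.closedBall x R, g w ≤ m := by
      intro w hw
      apply Finset.card_le_card
      intro n hn
      rw [Finset.mem_filter] at hn ⊢
      exact ⟨hn.1, hn.2.trans (Set.Ioo_subset_Ioo_right (hball w hw).2)⟩
    have hg_mono : ∀ y z : ℝ, y ∈ Metric.closedBall x R ∩ E → z ∈ Metric.closedBall x R ∩ E →
        y < z → r < z - y → g y < g z := by
      intro y z hy hz hyz hrgap
      obtain ⟨n, hnm, hnsub⟩ := key y z hy.2 hz.2 hyz m₀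
        (lt_of_le_of_lt (le_trans (htail m₀) hm₀spec) (by linarith))
      apply Finset.card_lt_card
      rw [Finset.ssubset_iff_of_subset]
      · refine ⟨n, ?_, ?_⟩
        · rw [Finset.mem_filter]
          refine ⟨Finset.mem_range.mpr hnm, hnsub.trans ?_⟩
          intro w hw
          exact ⟨lt_of_le_of_lt (hball y hy.1).1 hw.1, hw.2⟩
        · rw [Finset.mem_filter]
          rintro ⟨-, hcon⟩
          set w := (p n + q n) / 2 with hwdef
          have hwU : w ∈ U n := by
            rw [hUeq n]
            constructor <;> [linarith [hpq n]; linarith [hpq n]]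
          have h1 := (hcon hwU).2
          have h2 := (hnsub hwU).1
          linarith
      · intro k hk
        rw [Finset.mem_filter] at hk ⊢
        exact ⟨hk.1, hk.2.trans (Set.Ioo_subset_Ioo_right hyz.le)⟩
    have hfiber : ∀ y z : ℝ, y ∈ Metric.closedBall x R ∩ E → z ∈ Metric.closedBall x R ∩ E →
        g y = g z → |y - z| ≤ r := by
      intro y z hy hz hgyz
      rcases lt_trichotomy y z with h | h | h
      · rw [abs_sub_comm, abs_of_nonneg (by linarith)]
        by_contra hcon
        push_neg at hcon
        exact absurd hgyz (Nat.ne_of_lt (hg_mono y z hy hz h (by linarith)))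
      · simp [h]
        linarith
      · rw [abs_of_nonneg (by linarith)]
        by_contra hcon
        push_neg at hcon
        exact absurd hgyz.symm (Nat.ne_of_lt (hg_mono z y hz hy h (by linarith)))
    -- the cover
    set cent : ℕ → ℝ := fun v =>
      if h : ∃ w, w ∈ Metric.closedBall x R ∩ E ∧ g w = v then h.choose else 0 with hcentdef
    have hcov : Metric.closedBall x R ∩ E ⊆
        ⋃ y ∈ (Finset.range (m+1)).image cent, Metric.closedBall y r := by
      intro w hw
      have hex : ∃ w', w' ∈ Metric.closedBall x R ∩ E ∧ g w' = g w := ⟨w, hw, rfl⟩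
      have hcv : cent (g w) = hex.choose := dif_pos hex
      have hspec := hex.choose_spec
      refine Set.mem_iUnion₂.mpr ⟨cent (g w), ?_, ?_⟩
      · exact Finset.mem_image_of_mem _ (Finset.mem_range.mpr (Nat.lt_succ_of_le (hg_le w hw.1)))
      · rw [Metric.mem_closedBall, Real.dist_eq, hcv]
        exact hfiber w hex.choose hw hspec.1 hspec.2.symm
    have hcount : (coverNum r (Metric.closedBall x R ∩ E) : ℝ) ≤ (m : ℝ) + 1 := by
      have h1 := coverNum_le_of_cover hcov
      have h2 : ((Finset.range (m+1)).image cent).card ≤ m + 1 := by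
        apply le_trans (Finset.card_image_le)
        simp
      have := le_trans h1 h2
      exact_mod_cast this
    -- counting Bigs
    set u : ℝ := r * (1 - lam) / (2 * c₂) with hudef
    set v : ℝ := 2 * R / c₁ with hvdef
    have hu0 : 0 < u := by positivity
    have hv0 : 0 < v := by positivity
    have huv : u < v := by
      rw [hudef, hvdef, div_lt_div_iff₀ (by positivity) (by positivity)]
      nlinarith [mul_pos hr hc₁, mul_pos hr hc₂, mul_lt_mul_of_pos_right hrR hc₂]
    set A : ℝ := Real.log v / Real.log lam - 1 with hAdef
    set B : ℝ := Real.log u / Real.log lam - 1 with hBdef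
    have hAB : A ≤ B := by
      have hlog := Real.log_lt_log hu0 huv
      have := div_le_div_of_nonpos_of_le hloglam.le hlog.le
      rw [hAdef, hBdef]
      linarith
    have hbounds : ∀ n ∈ Bigs, A ≤ (n:ℝ) ∧ (n:ℝ) ≤ B := by
      intro n hn
      rw [hBigsdef, Finset.mem_filter, Finset.mem_range] at hn
      obtain ⟨hnm₀, hnsub⟩ := hn
      have hlogpow : Real.log (lam ^ (n+1)) = ((n:ℝ)+1) * Real.log lam := by
        rw [Real.log_pow]; push_cast; ring
      constructor
      · -- upper bound on gap length: a n ≤ 2R so lam^(n+1) ≤ v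
        rw [hUeq n] at hnsub
        have hio := (Set.Ioo_subset_Ioo_iff (hpq n)).mp hnsub
        have han : a n ≤ 2 * R := by
          rw [← hlen n]; linarith [hio.1, hio.2]
        have hpow : lam ^ (n+1) ≤ v := by
          rw [hvdef, le_div_iff₀ hc₁]
          calc lam ^ (n+1) * c₁ = c₁ * lam ^ (n+1) := by ring
          _ ≤ a n := (hbound n).1
          _ ≤ 2 * R := han
        have hlog2 : ((n:ℝ)+1) * Real.log lam ≤ Real.log v := by
          rw [← hlogpow]
          exact Real.log_le_log (pow_pos hlam0 _) hpow
        rw [hAdef]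
        have := (div_le_iff_of_neg hloglam).mpr hlog2
        linarith
      · -- lower bound: lam^(n+1) ≥ lam^m₀ > u
        have hm₀pos : 0 < m₀ := by omega
        have hmin : ¬ (c₂ * lam ^ ((m₀ - 1) + 1) / (1 - lam) ≤ r / 2) :=
          Nat.find_min hPex (Nat.sub_lt hm₀pos one_pos)
        rw [Nat.sub_add_cancel hm₀pos] at hmin
        push_neg at hmin
        have hum : u < lam ^ m₀ := by
          rw [hudef, div_lt_iff₀ (by positivity)]
          rw [lt_div_iff₀ h1lam] at hmin
          nlinarith
        have hmn : lam ^ m₀ ≤ lam ^ (n+1) :=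
          pow_le_pow_of_le_one hlam0.le hlam.le (by omega)
        have hulog : Real.log u < ((n:ℝ)+1) * Real.log lam := by
          rw [← hlogpow]
          exact Real.log_lt_log hu0 (lt_of_lt_of_le hum hmn)
        rw [hBdef]
        have := (lt_div_iff_of_neg hloglam).mpr hulog
        linarith
    have hmB : (m : ℝ) ≤ B - A + 1 := card_le_of_bounds Bigs A B hAB hbounds
    have hBA : B - A = (Real.log (R/r) + K) / D := by
      have hvu : v / u = (R/r) * (4 * c₂ / ((1 - lam) * c₁)) := by
        rw [hudef, hvdef]
        field_simp
        ring
      have hlogvu : Real.log (v/u) = Real.log (R/r) + K := by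
        rw [hvu, Real.log_mul (by positivity) (by positivity), hKdef]
      rw [hAdef, hBdef]
      have : Real.log u / Real.log lam - Real.log v / Real.log lam
          = (Real.log v - Real.log u) / D := by
        rw [hDdef]
        field_simp [hloglam.ne]
        ring
      rw [sub_sub_sub_cancel_right, this, ← Real.log_div hv0.ne' hu0.ne', hlogvu]
    -- final arithmetic
    set t : ℝ := (R/r) ^ α with htdef
    have hlogRr : Real.log (R/r) ≤ t / α := log_le_rpow_div hRr.le hα
    have hfin : (m : ℝ) + 1 ≤ (1 / (D * α) + K / D + 2) * t := by
      have e1 : (Real.log (R/r) + K) / D ≤ (t / α + K) / D := by gcongr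
      have e3 : (t / α + K) / D = t * (1 / (D * α)) + K / D := by
        field_simp
      have hKD : 0 ≤ K / D := by positivity
      have hKDt : K / D ≤ K / D * t := by nlinarith
      have h2t : (2:ℝ) ≤ 2 * t := by linarith
      have := hmB
      rw [hBA] at this
      have h4 : (m:ℝ) + 1 ≤ (t / α + K) / D + 2 := by linarith
      rw [e3] at h4
      nlinarith
    calc (coverNum r (Metric.closedBall x R ∩ E) : ℝ) ≤ (m : ℝ) + 1 := hcount
    _ ≤ (1 / (D * α) + K / D + 2) * t := hfin
  -- 0 ∈ E
  have h0E : (0:ℝ) ∈ E := by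
    rw [hEdef]
    refine ⟨⟨le_refl 0, hL0⟩, ?_⟩
    rw [Set.mem_iUnion]
    rintro ⟨n, hn⟩
    rw [hUeq n] at hn
    have hp0 : p n < 0 := hn.1
    have : p n / 2 ∈ U n := by
      rw [hUeq n]
      constructor
      · linarith
      · linarith [hn.2]
    have := (hUsub n this).1
    linarith
  -- every exponent in the defining set is nonnegative
  have hnonneg : ∀ b : ℝ, (∃ c > (0 : ℝ), ∃ ρ > (0 : ℝ), ∀ x ∈ E, ∀ r R : ℝ,
      0 < r → r < R → R < ρ →
      (coverNum r (Metric.closedBall x R ∩ E) : ℝ) ≤ c * (R / r) ^ b) → 0 ≤ b := by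
    intro b hb
    by_contra hneg
    push_neg at hneg
    obtain ⟨c, hc, ρ, hρ, H⟩ := hb
    set R := ρ / 2 with hRdef
    have hR0 : 0 < R := by positivity
    set ε : ℝ := min (1/2) ((1/(2*c)) ^ ((1:ℝ)/(-b))) with hεdef
    have hε0 : 0 < ε := lt_min one_half_pos (Real.rpow_pos_of_pos (by positivity) _)
    have hε1 : ε < 1 := lt_of_le_of_lt (min_le_left _ _) one_half_lt_one
    set r := R * ε with hrdef
    have hr0 : 0 < r := by positivity
    have hrR : r < R := by
      rw [hrdef]
      nlinarith
    have hRρ : R < ρ := by rw [hRdef]; linarith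
    have hRr : R / r = ε⁻¹ := by
      rw [hrdef]
      field_simp
    have hrpow : (R / r) ^ b = ε ^ (-b) := by
      rw [hRr, Real.inv_rpow hε0.le, ← Real.rpow_neg hε0.le]
    have hεle : ε ≤ (1/(2*c)) ^ ((1:ℝ)/(-b)) := min_le_right _ _
    have hεpow : ε ^ (-b) ≤ 1/(2*c) := by
      calc ε ^ (-b) ≤ ((1/(2*c)) ^ ((1:ℝ)/(-b))) ^ (-b) :=
            Real.rpow_le_rpow hε0.le hεle (by linarith)
      _ = (1/(2*c)) ^ (((1:ℝ)/(-b)) * (-b)) := by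
            rw [← Real.rpow_mul (by positivity)]
      _ = 1/(2*c) := by
            rw [one_div_mul_cancel (by linarith : -b ≠ 0), Real.rpow_one]
    have hcov_le : c * (R / r) ^ b ≤ 1/2 := by
      rw [hrpow]
      calc c * ε ^ (-b) ≤ c * (1/(2*c)) := by
            exact mul_le_mul_of_nonneg_left hεpow hc.le
      _ = 1/2 := by field_simp
    have hle := H 0 h0E r R hr0 hrR hRρ
    have hge : 1 ≤ coverNum r (Metric.closedBall 0 R ∩ E) := by
      apply one_le_coverNum
      · exact ⟨0, Metric.mem_closedBall_self hR0.le, h0E⟩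
      · obtain ⟨T, hT⟩ := exists_cover_Icc (-R) R r hr0
        refine ⟨T, fun w hw => hT ?_⟩
        have := hw.1
        rw [Metric.mem_closedBall, Real.dist_eq, abs_le] at this
        exact ⟨by linarith [this.1], by linarith [this.2]⟩
    have : (1:ℝ) ≤ (coverNum r (Metric.closedBall 0 R ∩ E) : ℝ) := by exact_mod_cast hge
    linarith
  -- assemble
  rw [dimA]
  have hbdd : BddBelow {α : ℝ | ∃ c > (0 : ℝ), ∃ ρ > (0 : ℝ), ∀ x ∈ E, ∀ r R : ℝ,
      0 < r → r < R → R < ρ →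
      (coverNum r (Metric.closedBall x R ∩ E) : ℝ) ≤ c * (R / r) ^ α} :=
    ⟨0, fun b hb => hnonneg b hb⟩
  apply le_antisymm
  · by_contra hcon
    push_neg at hcon
    have h1 := csInf_le hbdd (hmem _ (half_pos hcon))
    linarith [h1]
  · exact le_csInf ⟨1, hmem 1 one_pos⟩ fun b hb => hnonneg b hb
end
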